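/- arXiv:1109.1681 — 6 statements merged into one kernel-verified Lean document; each statement's English description precedes it below -/
import Mathlib

section
/- Let F be a finite field and C ⊆ F^n a linear code that is not an orthogonal direct sum, i.e., there is no nontrivial partition of the coordinate set {1,…,n} into parts S and T such that C = (C ∩ F^S) ⊕ (C ∩ F^T), where F^S denotes the vectors supported on S. Then the kernel of the restriction to Mon(C) of the permutational-part homomorphism π : Mon_n(F) → S_n consists exactly of the scalar transformations {α·id : α ∈ F^*}, and is hence isomorphic to F^*. -/
open Finset

/-- The submodule of vectors of `F^n` supported on the coordinate set `S`. -/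
def supportedOn {F : Type*} [Field F] {n : ℕ} (S : Set (Fin n)) :
    Submodule F (Fin n → F) where
  carrier := {x | ∀ i ∉ S, x i = 0}
  add_mem' := by intro a b ha hb i hi; simp [ha i hi, hb i hi]
  zero_mem' := fun i _ => rfl
  smul_mem' := by intro c x hx i hi; simp [hx i hi]

/-- `C` is an orthogonal direct sum: there is a nontrivial partition `S, Sᶜ` of
the coordinates such that `C = (C ∩ F^S) ⊕ (C ∩ F^(Sᶜ))`. -/
def IsOrthogonalDirectSum {F : Type*} [Field F] {n : ℕ}
    (C : Submodule F (Fin n → F)) : Prop :=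
  ∃ S : Set (Fin n), S.Nonempty ∧ S ≠ Set.univ ∧
    C = (C ⊓ supportedOn S) ⊔ (C ⊓ supportedOn Sᶜ)

/-- Auxiliary: if a diagonal map with entries `α` preserves `C`, then for any
finset `L` of scalars, the map `x ↦ fun i => (∏ λ ∈ L, (α i - λ)) * x i`
preserves `C`. -/
lemma prod_diag_mem {F : Type*} [Field F] {n : ℕ}
    (C : Submodule F (Fin n → F)) (α : Fin n → Fˣ)
    (hdiag : ∀ x ∈ C, (fun i => (α i : F) * x i) ∈ C)
    (L : Finset F) :
    ∀ x ∈ C, (fun i => (∏ l ∈ L, ((α i : F) - l)) * x i) ∈ C := by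
  classical
  induction L using Finset.induction_on with
  | empty => intro x hx; simpa using hx
  | @insert a L ha ih =>
    intro x hx
    have hx' : (fun i => ((α i : F) - a) * x i) ∈ C := by
      have h1 : (fun i => (α i : F) * x i) ∈ C := hdiag x hx
      have h2 : (fun i => ((α i : F) - a) * x i)
          = (fun i => (α i : F) * x i) - a • x := by
        funext i; simp only [Pi.sub_apply, Pi.smul_apply, smul_eq_mul]; ring
      rw [h2]; exact C.sub_mem h1 (C.smul_mem a hx)
    have := ih _ hx'
    have heq : (fun i => (∏ l ∈ insert a L, ((α i : F) - l)) * x i)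
        = (fun i => (∏ l ∈ L, ((α i : F) - l)) * (((α i : F) - a) * x i)) := by
      funext i; rw [Finset.prod_insert ha]; ring
    rw [heq]; exact this

/-- If a linear code `C ⊆ F^n` is not an orthogonal direct sum, then the kernel
of the permutational-part homomorphism restricted to `Mon(C)` consists exactly of
the scalar transformations: every monomial transformation preserving `C` whose
permutational part is trivial (i.e. every diagonal transformation preserving `C`)
is a scalar, and conversely every scalar transformation preserves `C`.
Hence this kernel is isomorphic to `F^*`. -/
theorem kernel_of_permutational_part_is_scalars
    {F : Type*} [Field F] [Fintype F] {n : ℕ}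
    (C : Submodule F (Fin n → F)) (hC : ¬ IsOrthogonalDirectSum C) :
    (∀ (σ : (Fin n → F) ≃ₗ[F] (Fin n → F)) (α : Fin n → Fˣ),
      (∀ x i, σ x i = (α i : F) * x i) →
      C.map (σ : (Fin n → F) →ₗ[F] (Fin n → F)) = C →
      ∃ β : Fˣ, ∀ i, α i = β) ∧
    (∀ β : Fˣ, ∃ σ : (Fin n → F) ≃ₗ[F] (Fin n → F),
      (∀ x i, σ x i = (β : F) * x i) ∧
      C.map (σ : (Fin n → F) →ₗ[F] (Fin n → F)) = C) := by
  classical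
  constructor
  · intro σ α hσ hmap
    by_contra hnc
    push_neg at hnc
    obtain ⟨i₀, _⟩ := hnc 1
    obtain ⟨j, hj⟩ := hnc (α i₀)
    set β : Fˣ := α i₀ with hβ
    -- σ preserves C
    have hdiag : ∀ x ∈ C, (fun i => (α i : F) * x i) ∈ C := by
      intro x hx
      have : σ x ∈ C := by
        rw [← hmap]; exact ⟨x, hx, rfl⟩
      have hfun : (fun i => (α i : F) * x i) = σ x := by
        funext i; rw [hσ]
      rwa [hfun]
    set L : Finset F := (Finset.univ.image fun i => (α i : F)).erase (β : F) with hL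
    have hβL : (β : F) ∉ L := Finset.notMem_erase _ _
    have hprodne : (∏ l ∈ L, ((β : F) - l)) ≠ 0 := by
      apply Finset.prod_ne_zero_iff.2
      intro l hl
      have : l ≠ (β : F) := Finset.ne_of_mem_erase hl
      exact sub_ne_zero.2 (Ne.symm this)
    set c : F := (∏ l ∈ L, ((β : F) - l))⁻¹ with hc
    -- for each x ∈ C, the S-part of x is in C
    have key : ∀ x ∈ C, (fun i => if α i = β then x i else 0) ∈ C := by
      intro x hx
      have hy := prod_diag_mem C α hdiag L x hx
      have := C.smul_mem c hy
      have heq : c • (fun i => (∏ l ∈ L, ((α i : F) - l)) * x i)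
          = (fun i => if α i = β then x i else 0) := by
        funext i
        by_cases h : α i = β
        · simp only [Pi.smul_apply, smul_eq_mul]
          rw [if_pos h, h, hc, ← mul_assoc, inv_mul_cancel₀ hprodne, one_mul]
        · have hmem : (α i : F) ∈ L := by
            apply Finset.mem_erase.2
            refine ⟨?_, Finset.mem_image.2 ⟨i, Finset.mem_univ i, rfl⟩⟩
            intro hcoe
            exact h (Units.ext hcoe)
          have : (∏ l ∈ L, ((α i : F) - l)) = 0 :=
            Finset.prod_eq_zero hmem (by simp)
          simp [this, h]
      rwa [heq] at this
    apply hC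
    refine ⟨{i | α i = β}, ⟨i₀, by simp [hβ]⟩, ?_, ?_⟩
    · intro huniv
      have : j ∈ ({i | α i = β} : Set (Fin n)) := huniv ▸ Set.mem_univ j
      exact hj this
    · apply le_antisymm
      · intro x hx
        set xS : Fin n → F := fun i => if α i = β then x i else 0 with hxS
        have hxS_mem : xS ∈ C := key x hx
        have h1 : xS ∈ C ⊓ supportedOn {i | α i = β} := by
          refine ⟨hxS_mem, ?_⟩
          intro i hi
          simp only [Set.mem_setOf_eq] at hi
          simp [hxS, hi]
        have h2 : x - xS ∈ C ⊓ supportedOn {i | α i = β}ᶜ := by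
          refine ⟨C.sub_mem hx hxS_mem, ?_⟩
          intro i hi
          simp only [Set.mem_compl_iff, Set.mem_setOf_eq, not_not] at hi
          simp [hxS, hi]
        have : xS + (x - xS) ∈ (C ⊓ supportedOn {i | α i = β}) ⊔
            (C ⊓ supportedOn {i | α i = β}ᶜ) :=
          Submodule.add_mem_sup h1 h2
        simpa using this
      · exact sup_le inf_le_left inf_le_left
  · intro β
    refine ⟨DistribMulAction.toLinearEquiv F (Fin n → F) β, ?_, ?_⟩
    · intro x i
      simp [DistribMulAction.toLinearEquiv, Units.smul_def]
    · apply le_antisymm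
      · rintro _ ⟨y, hy, rfl⟩
        simpa [Units.smul_def] using C.smul_mem (β : F) hy
      · intro x hx
        refine ⟨(β⁻¹ : Fˣ) • x, C.smul_mem _ hx, ?_⟩
        simp [smul_smul]
end

section
/- Let F be a finite field and let σ ∈ Mon_n(F) have prime order p, where p does not divide |F^*| = |F| − 1. Then there exists τ ∈ Mon_n(F) such that τστ^{-1} has trivial monomial part, i.e., τστ^{-1} is a permutation of the coordinates. -/
open Finset

/-- A monomial transformation of `F^n`: `(σ x) i = α i * x (π⁻¹ i)` with `α i ∈ Fˣ`
and `π` a permutation of the coordinates. -/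
def IsMonomial {F : Type*} [Field F] {n : ℕ}
    (σ : (Fin n → F) ≃ₗ[F] (Fin n → F)) : Prop :=
  ∃ (α : Fin n → Fˣ) (π : Equiv.Perm (Fin n)), ∀ x i, σ x i = (α i : F) * x (π⁻¹ i)

/-- Diagonal linear automorphism with unit entries. -/
def diagEquiv {F : Type*} [Field F] {n : ℕ} (β : Fin n → Fˣ) :
    (Fin n → F) ≃ₗ[F] (Fin n → F) where
  toFun x := fun i => (β i : F) * x i
  invFun x := fun i => ((β i)⁻¹ : Fˣ) * x i
  map_add' x y := by funext i; simp [mul_add]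
  map_smul' c x := by funext i; simp; ring
  left_inv x := by funext i; simp [← mul_assoc]
  right_inv x := by funext i; simp [← mul_assoc]

lemma key_prod {G : Type*} [CommGroup G] (p : ℕ) (A : ℕ → G) (hA : A p = A 0)
    (hprod : ∏ j ∈ range p, A j = 1) (s : ℤ) (hs : ∀ u : G, u ^ ((p : ℤ) * s) = u) :
    ∏ j ∈ range p, A (j + 1) ^ ((j : ℤ) * s) =
      A 0 * ∏ j ∈ range p, A j ^ ((j : ℤ) * s) := by
  set B : ℕ → G := fun j => A j ^ ((j : ℤ) * s) with hB
  have hB0 : B 0 = 1 := by simp [hB]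
  have step : ∀ j : ℕ, A (j + 1) ^ ((j : ℤ) * s) = B (j + 1) * (A (j + 1) ^ s)⁻¹ := by
    intro j
    rw [hB]
    rw [← zpow_neg, ← zpow_add]
    congr 1
    push_cast
    ring
  have T2 : ∏ j ∈ range p, A (j + 1) = 1 := by
    have h1 : ∏ j ∈ range (p + 1), A j = (∏ j ∈ range p, A (j + 1)) * A 0 :=
      Finset.prod_range_succ' A p
    have h2 : ∏ j ∈ range (p + 1), A j = (∏ j ∈ range p, A j) * A p :=
      Finset.prod_range_succ A p
    rw [h2, hprod, hA, one_mul] at h1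
    exact mul_right_cancel (b := A 0) (c := 1) (by rw [one_mul, ← h1])
  have T1 : ∏ j ∈ range p, B (j + 1) = (∏ j ∈ range p, B j) * A 0 := by
    have h1 : ∏ j ∈ range (p + 1), B j = (∏ j ∈ range p, B (j + 1)) * B 0 :=
      Finset.prod_range_succ' B p
    have h2 : ∏ j ∈ range (p + 1), B j = (∏ j ∈ range p, B j) * B p :=
      Finset.prod_range_succ B p
    have hBp : B p = A 0 := by rw [hB]; simp only []; rw [hA]; exact hs (A 0)
    rw [hB0, mul_one] at h1
    rw [← h1, h2, hBp]
  calc ∏ j ∈ range p, A (j + 1) ^ ((j : ℤ) * s)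
      = ∏ j ∈ range p, (B (j + 1) * (A (j + 1) ^ s)⁻¹) :=
        Finset.prod_congr rfl fun j _ => step j
    _ = (∏ j ∈ range p, B (j + 1)) * (∏ j ∈ range p, (A (j + 1) ^ s)⁻¹) :=
        Finset.prod_mul_distrib
    _ = A 0 * ∏ j ∈ range p, A j ^ ((j : ℤ) * s) := by
        rw [T1]
        rw [Finset.prod_inv_distrib, Finset.prod_zpow, T2, one_zpow, inv_one, mul_one,
          mul_comm]

/-- Let `F` be a finite field and let `σ ∈ Mon_n(F)` have prime order `p`, where
`p` does not divide `|F^*| = |F| - 1`.  Then there exists `τ ∈ Mon_n(F)` such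
that `τ σ τ⁻¹` has trivial monomial part, i.e. it is a pure coordinate
permutation. -/
theorem monomial_of_prime_order_conjugate_to_permutation
    {F : Type*} [Field F] [Fintype F] {n : ℕ}
    (σ : (Fin n → F) ≃ₗ[F] (Fin n → F)) (hσ : IsMonomial σ)
    (p : ℕ) (hp : p.Prime) (hord : orderOf σ = p)
    (hdvd : ¬ p ∣ Fintype.card F - 1) :
    ∃ τ : (Fin n → F) ≃ₗ[F] (Fin n → F), IsMonomial τ ∧
      ∃ ρ : Equiv.Perm (Fin n), ∀ x i, (τ * σ * τ⁻¹) x i = x (ρ⁻¹ i) := by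
  classical
  obtain ⟨α, π, hσα⟩ := hσ
  have hσp : σ ^ p = 1 := by rw [← hord]; exact pow_orderOf_eq_one σ
  set g : Equiv.Perm (Fin n) := π⁻¹ with hg
  -- iteration formula
  have hiter : ∀ (k : ℕ) (x : Fin n → F) (i : Fin n),
      (σ ^ k) x i = ((∏ j ∈ range k, α ((g ^ j) i) : Fˣ) : F) * x ((g ^ k) i) := by
    intro k
    induction k with
    | zero => intro x i; simp
    | succ k ih =>
      intro x i
      have h1 : (σ ^ (k + 1)) x = (σ ^ k) (σ x) := by rw [pow_succ]; rfl
      rw [h1, ih, hσα]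
      have h2 : (g ^ (k + 1)) i = g ((g ^ k) i) := by
        rw [pow_succ']; rfl
      have h3 : g ((g ^ k) i) = (g ^ (k + 1)) i := by rw [h2]
      rw [h3, Finset.prod_range_succ, Units.val_mul]
      ring
  -- the permutation part has order dividing p
  have hfix : ∀ i : Fin n, (g ^ p) i = i := by
    intro i
    by_contra h
    have h1 := hiter p (Pi.single ((g ^ p) i) (1 : F)) i
    rw [hσp] at h1
    simp only [LinearEquiv.coe_one, id_eq] at h1
    rw [Pi.single_apply, Pi.single_apply] at h1
    rw [if_neg (fun hh => h hh.symm), if_pos rfl, mul_one] at h1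
    exact Units.ne_zero _ h1.symm
  -- the cycle products are 1
  have hcyc : ∀ i : Fin n, (∏ j ∈ range p, α ((g ^ j) i)) = 1 := by
    intro i
    have h1 := hiter p (Pi.single i (1 : F)) i
    rw [hσp, hfix i] at h1
    simp only [LinearEquiv.coe_one, id_eq] at h1
    rw [Pi.single_eq_same, mul_one] at h1
    exact Units.ext h1.symm
  -- Bezout coefficient
  have hcop : Nat.Coprime p (Fintype.card F - 1) := (hp.coprime_iff_not_dvd).mpr hdvd
  set m : ℕ := Fintype.card F - 1 with hm
  set s : ℤ := Int.gcdA p m with hsdef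
  have hbez : (1 : ℤ) = p * s + m * Int.gcdB p m := by
    have h1 := Int.gcd_eq_gcd_ab (p : ℤ) (m : ℤ)
    rwa [Int.gcd_natCast_natCast, hcop] at h1
  have hs : ∀ u : Fˣ, u ^ ((p : ℤ) * s) = u := by
    intro u
    have hcard : u ^ (m : ℤ) = 1 := by
      rw [zpow_natCast, hm, ← Fintype.card_units]
      exact pow_card_eq_one
    have h2 : (p : ℤ) * s = 1 - (m : ℤ) * Int.gcdB p m := by omega
    rw [h2, zpow_sub, zpow_one, zpow_mul, hcard, one_zpow, inv_one, mul_one]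
  -- the diagonal conjugator
  set β : Fin n → Fˣ := fun i => ∏ j ∈ range p, α ((g ^ j) i) ^ ((j : ℤ) * s) with hβdef
  have hβ : ∀ i : Fin n, β (g i) = α i * β i := by
    intro i
    have hkey := key_prod p (fun j => α ((g ^ j) i)) (by show α ((g ^ p) i) = α ((g ^ 0) i); rw [hfix i, pow_zero]; rfl) (hcyc i) s hs
    have h1 : β (g i) = ∏ j ∈ range p, α ((g ^ (j + 1)) i) ^ ((j : ℤ) * s) := by
      rw [hβdef]
      refine Finset.prod_congr rfl fun j _ => ?_
      have hje : (g ^ (j + 1)) i = (g ^ j) (g i) := by rw [pow_succ]; rfl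
      rw [hje]
    simp only [pow_zero, Equiv.Perm.coe_one, id_eq] at hkey
    rw [h1, hkey]
  refine ⟨diagEquiv β, ⟨β, 1, fun x i => rfl⟩, π, fun x i => ?_⟩
  have happ : (diagEquiv β * σ * (diagEquiv β)⁻¹) x i
      = (β i : F) * σ (((diagEquiv β).symm) x) i := rfl
  rw [happ, hσα]
  have hsymm : ((diagEquiv β).symm) x (π⁻¹ i) = ((β (π⁻¹ i))⁻¹ : Fˣ) * x (π⁻¹ i) := rfl
  rw [hsymm]
  show (β i : F) * ((α i : F) * ((((β (g i))⁻¹ : Fˣ) : F) * x (g i))) = x (g i)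
  rw [Units.val_inv_eq_inv_val, hβ i, Units.val_mul, mul_inv]
  have hα : (α i : F) ≠ 0 := Units.ne_zero _
  have hb : (β i : F) ≠ 0 := Units.ne_zero _
  field_simp
end

section
/- Let F be a finite field, p a prime different from char(F), and C ⊆ F^n a linear code invariant under the coordinate permutation σ = (1,…,p)(p+1,…,2p)⋯((t−1)p+1,…,tp), which fixes the last f = n − tp coordinates. Let C(σ) = {c ∈ C : c is constant on each of the t cycles} be the fixed code, and let E = {c ∈ C : the sum of the coordinates of c over each cycle is 0 and c vanishes on all fixed coordinates}. Then C = C(σ) ⊕ E, and E is the unique σ-invariant complement of C(σ) in C. -/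
open Finset

/-- The linear action of a coordinate permutation on `F^n`: `(π x) i = x (π⁻¹ i)`. -/
def permLinear {F : Type*} [Field F] {n : ℕ} (π : Equiv.Perm (Fin n)) :
    (Fin n → F) →ₗ[F] (Fin n → F) where
  toFun x := fun i => x (π⁻¹ i)
  map_add' _ _ := rfl
  map_smul' _ _ := rfl

/-- Vectors that are constant on every cycle of `π`. -/
def constantOnCycles {F : Type*} [Field F] {n : ℕ} (π : Equiv.Perm (Fin n)) :
    Submodule F (Fin n → F) where
  carrier := {x | ∀ i, x (π i) = x i}
  add_mem' := by intro a b ha hb i; simp [ha i, hb i]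
  zero_mem' := fun _ => rfl
  smul_mem' := by intro c x hx i; simp [hx i]

/-- Vectors vanishing on all fixed points of `π` whose coordinate sum over each
cycle (of length `p`) is zero. -/
def cycleSumZero {F : Type*} [Field F] {n : ℕ} (π : Equiv.Perm (Fin n)) (p : ℕ) :
    Submodule F (Fin n → F) where
  carrier := {x | (∀ i, π i = i → x i = 0) ∧
    ∀ i, ∑ k ∈ Finset.range p, x ((π ^ k) i) = 0}
  add_mem' := by
    rintro a b ⟨ha1, ha2⟩ ⟨hb1, hb2⟩
    refine ⟨fun i hi => by simp [ha1 i hi, hb1 i hi], fun i => ?_⟩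
    simp only [Pi.add_apply, Finset.sum_add_distrib, ha2 i, hb2 i, add_zero]
  zero_mem' := ⟨fun _ _ => rfl, fun i => by simp⟩
  smul_mem' := by
    rintro c x ⟨h1, h2⟩
    refine ⟨fun i hi => by simp [h1 i hi], fun i => ?_⟩
    simp only [Pi.smul_apply, smul_eq_mul, ← Finset.mul_sum, h2 i, mul_zero]

lemma shift_mem {F : Type*} [Field F] {n : ℕ} (σ : Equiv.Perm (Fin n))
    (C : Submodule F (Fin n → F)) (hinv : C.map (permLinear σ) = C)
    {x : Fin n → F} (hx : x ∈ C) : (fun i => x (σ i)) ∈ C := by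
  rw [← hinv] at hx
  obtain ⟨y, hy, hyx⟩ := hx
  have : (fun i => x (σ i)) = y := by
    funext i
    rw [← hyx]
    simp [permLinear]
  rwa [this]

lemma shift_pow_mem {F : Type*} [Field F] {n : ℕ} (σ : Equiv.Perm (Fin n))
    (C : Submodule F (Fin n → F)) (hinv : C.map (permLinear σ) = C)
    {x : Fin n → F} (hx : x ∈ C) (k : ℕ) : (fun i => x ((σ ^ k) i)) ∈ C := by
  induction k with
  | zero => simpa using hx
  | succ k ih =>
      have := shift_mem σ C hinv ih
      have heq : (fun i => (fun j => x ((σ ^ k) j)) (σ i)) = fun i => x ((σ ^ (k+1)) i) := by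
        funext i
        simp [pow_succ, Equiv.Perm.mul_apply]
      rwa [heq] at this

lemma sigma_pow_formula {p t f : ℕ} (hp : 0 < p) (σ : Equiv.Perm (Fin (p * t + f)))
    (hσ : ∀ i : Fin (p * t + f), (σ i : ℕ) =
      if (i : ℕ) < p * t then p * ((i : ℕ) / p) + (((i : ℕ) % p + 1) % p)
      else (i : ℕ)) :
    ∀ (k : ℕ) (i : Fin (p * t + f)), ((σ ^ k) i : ℕ) =
      if (i : ℕ) < p * t then p * ((i : ℕ) / p) + (((i : ℕ) % p + k) % p)
      else (i : ℕ) := by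
  intro k
  induction k with
  | zero =>
      intro i
      split
      · simp [Nat.mod_mod_of_dvd, Nat.div_add_mod]
      · simp
  | succ k ih =>
      intro i
      have hji : ((σ ^ (k+1)) i : ℕ) = (σ ((σ ^ k) i) : ℕ) := by
        rw [pow_succ', Equiv.Perm.mul_apply]
      rw [hji, hσ ((σ ^ k) i), ih i]
      by_cases hi : (i : ℕ) < p * t
      · have hr : ((i : ℕ) % p + k) % p < p := Nat.mod_lt _ hp
        have hdiv : (i : ℕ) / p < t := Nat.div_lt_of_lt_mul (by omega)
        have hlt : p * ((i : ℕ) / p) + (((i : ℕ) % p + k) % p) < p * t := by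
          calc p * ((i : ℕ) / p) + (((i : ℕ) % p + k) % p) < p * ((i : ℕ) / p) + p := by omega
          _ = p * ((i : ℕ) / p + 1) := by ring
          _ ≤ p * t := Nat.mul_le_mul_left _ (by omega)
        simp only [hi, if_true, hlt, if_true]
        have h1 : (p * ((i : ℕ) / p) + (((i : ℕ) % p + k) % p)) / p = (i : ℕ) / p := by
          rw [Nat.mul_add_div hp, Nat.div_eq_of_lt hr, Nat.add_zero]
        have h2 : (p * ((i : ℕ) / p) + (((i : ℕ) % p + k) % p)) % p = ((i : ℕ) % p + k) % p := by
          rw [Nat.mul_add_mod, Nat.mod_mod_of_dvd _ dvd_rfl]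
        rw [h1, h2, Nat.mod_add_mod, Nat.add_assoc]
      · simp only [hi, if_false]

lemma sigma_pow_p {p t f : ℕ} (hp : 0 < p) (σ : Equiv.Perm (Fin (p * t + f)))
    (hσ : ∀ i : Fin (p * t + f), (σ i : ℕ) =
      if (i : ℕ) < p * t then p * ((i : ℕ) / p) + (((i : ℕ) % p + 1) % p)
      else (i : ℕ)) : σ ^ p = 1 := by
  ext i
  have := sigma_pow_formula hp σ hσ p i
  have hcoord : ((σ ^ p) i : ℕ) = (i : ℕ) := by
    rw [this]
    split
    · rw [Nat.add_mod_right, Nat.mod_mod_of_dvd _ dvd_rfl, Nat.div_add_mod]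
    · rfl
  simpa using hcoord

/-- Let `p` be a prime different from `char F` and let `C ⊆ F^n`, `n = pt + f`,
be a linear code invariant under the coordinate permutation `σ` consisting of
the `t` `p`-cycles `(1,…,p)⋯((t-1)p+1,…,tp)`, fixing the last `f` coordinates.
Let `C(σ) = C ⊓ constantOnCycles σ` be the fixed code and
`E = C ⊓ cycleSumZero σ p` the subcode of words vanishing at fixed points whose
cycle sums are zero.  Then `C = C(σ) ⊕ E`, and `E` is the unique `σ`-invariant
complement of `C(σ)` in `C`. -/
theorem fixed_code_decomposition
    {F : Type*} [Field F] [Fintype F] {p t f : ℕ}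
    (hp : p.Prime) (hchar : p ≠ ringChar F)
    (σ : Equiv.Perm (Fin (p * t + f)))
    (hσ : ∀ i : Fin (p * t + f), (σ i : ℕ) =
      if (i : ℕ) < p * t then p * ((i : ℕ) / p) + (((i : ℕ) % p + 1) % p)
      else (i : ℕ))
    (C : Submodule F (Fin (p * t + f) → F))
    (hinv : C.map (permLinear σ) = C) :
    ((C ⊓ constantOnCycles σ) ⊔ (C ⊓ cycleSumZero σ p) = C ∧
      (C ⊓ constantOnCycles σ) ⊓ (C ⊓ cycleSumZero σ p) = ⊥) ∧
    ∀ E' : Submodule F (Fin (p * t + f) → F), E' ≤ C →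
      E'.map (permLinear σ) = E' →
      (C ⊓ constantOnCycles σ) ⊔ E' = C →
      (C ⊓ constantOnCycles σ) ⊓ E' = ⊥ →
      E' = C ⊓ cycleSumZero σ p := by
  have hppos := hp.pos
  -- p is invertible in F
  have hp0 : (p : F) ≠ 0 := by
    intro h
    have hdvd : ringChar F ∣ p := (ringChar.spec F p).mp h
    have hq : (ringChar F).Prime := CharP.char_is_prime F (ringChar F)
    rcases (hp.eq_one_or_self_of_dvd _ hdvd) with h1 | h1
    · exact hq.one_lt.ne' h1
    · exact hchar h1.symm
  have hσp : σ ^ p = 1 := sigma_pow_p hppos σ hσ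
  -- the averaging operator
  set Q : (Fin (p * t + f) → F) → (Fin (p * t + f) → F) :=
    fun x i => (p : F)⁻¹ * ∑ k ∈ Finset.range p, x ((σ ^ k) i) with hQdef
  have hQmem : ∀ (D : Submodule F (Fin (p * t + f) → F)),
      D.map (permLinear σ) = D → ∀ x ∈ D, Q x ∈ D := by
    intro D hD x hx
    have : Q x = (p : F)⁻¹ • ∑ k ∈ Finset.range p, (fun i => x ((σ ^ k) i)) := by
      funext i
      simp [hQdef, Finset.sum_apply]
    rw [this]
    exact D.smul_mem _ (Submodule.sum_mem D fun k _ => shift_pow_mem σ D hD hx k)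
  have hconstpow : ∀ x : Fin (p * t + f) → F, (∀ j, x (σ j) = x j) → ∀ (k : ℕ) (i), x ((σ ^ k) i) = x i := by
    intro x hx k i
    induction k with
    | zero => simp
    | succ k ih => rw [pow_succ', Equiv.Perm.mul_apply, hx, ih]
  have hfixpow : ∀ i, σ i = i → ∀ k : ℕ, (σ ^ k) i = i := by
    intro i hi k
    induction k with
    | zero => simp
    | succ k ih => rw [pow_succ', Equiv.Perm.mul_apply, ih, hi]
  have hsum_const : ∀ c : F, ∑ _k ∈ Finset.range p, c = (p : F) * c := by
    intro c
    rw [Finset.sum_const, Finset.card_range, nsmul_eq_mul]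
  have hQconst : ∀ x, Q x ∈ constantOnCycles σ := by
    intro x
    intro i
    show Q x (σ i) = Q x i
    have key : ∑ k ∈ Finset.range p, x ((σ ^ k) (σ i)) = ∑ k ∈ Finset.range p, x ((σ ^ k) i) := by
      have h1 : ∀ k, x ((σ ^ k) (σ i)) = x ((σ ^ (k + 1)) i) := fun k => by
        rw [pow_succ, Equiv.Perm.mul_apply]
      have hfp : x ((σ ^ p) i) = x ((σ ^ 0) i) := by rw [hσp]; simp
      have h2 : ∑ k ∈ Finset.range p, x ((σ ^ (k + 1)) i) + x ((σ ^ 0) i)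
          = ∑ k ∈ Finset.range p, x ((σ ^ k) i) + x ((σ ^ p) i) := by
        rw [← Finset.sum_range_succ' (fun k => x ((σ ^ k) i)) p,
            Finset.sum_range_succ (fun k => x ((σ ^ k) i)) p]
      simp_rw [h1]
      rw [hfp] at h2
      exact add_right_cancel h2
    simp [hQdef, key]
  have hQ_fix : ∀ x i, σ i = i → Q x i = x i := by
    intro x i hi
    have : ∑ k ∈ Finset.range p, x ((σ ^ k) i) = (p : F) * x i := by
      rw [Finset.sum_congr rfl fun k _ => by rw [hfixpow i hi k]]
      exact hsum_const _
    simp [hQdef, this, inv_mul_cancel_left₀ hp0]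
  have hQ_of_const : ∀ x ∈ constantOnCycles σ, Q x = x := by
    intro x hx
    funext i
    have hx' : ∀ j, x (σ j) = x j := hx
    have : ∑ k ∈ Finset.range p, x ((σ ^ k) i) = (p : F) * x i := by
      rw [Finset.sum_congr rfl fun k _ => by rw [hconstpow x hx' k]]
      exact hsum_const _
    simp [hQdef, this, inv_mul_cancel_left₀ hp0]
  have hQ_zero : ∀ x ∈ cycleSumZero σ p, Q x = 0 := by
    intro x hx
    funext i
    have hx2 : ∑ k ∈ Finset.range p, x ((σ ^ k) i) = 0 := hx.2 i
    simp [hQdef, hx2]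
  have hsub : ∀ x, x - Q x ∈ cycleSumZero σ p := by
    intro x
    refine ⟨fun i hi => ?_, fun i => ?_⟩
    · show x i - Q x i = 0
      rw [hQ_fix x i hi, sub_self]
    · have hc : ∀ j, Q x (σ j) = Q x j := hQconst x
      calc ∑ k ∈ Finset.range p, (x - Q x) ((σ ^ k) i)
          = ∑ k ∈ Finset.range p, (x ((σ ^ k) i) - Q x i) := by
            refine Finset.sum_congr rfl fun k _ => ?_
            rw [Pi.sub_apply, hconstpow (Q x) hc k i]
        _ = (∑ k ∈ Finset.range p, x ((σ ^ k) i)) - (p : F) * Q x i := by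
            rw [Finset.sum_sub_distrib, hsum_const]
        _ = 0 := by
            have : (p : F) * Q x i = ∑ k ∈ Finset.range p, x ((σ ^ k) i) := by
              simp [hQdef, mul_inv_cancel_left₀ hp0]
            rw [this, sub_self]
  have hQadd : ∀ x y, Q (x + y) = Q x + Q y := by
    intro x y
    funext i
    simp [hQdef, Finset.sum_add_distrib, mul_add]
  refine ⟨⟨?_, ?_⟩, ?_⟩
  · -- sup = C
    apply le_antisymm
    · exact sup_le inf_le_left inf_le_left
    · intro x hx
      have h1 : Q x ∈ C ⊓ constantOnCycles σ :=
        Submodule.mem_inf.mpr ⟨hQmem C hinv x hx, hQconst x⟩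
      have h2 : x - Q x ∈ C ⊓ cycleSumZero σ p :=
        Submodule.mem_inf.mpr ⟨C.sub_mem hx (hQmem C hinv x hx), hsub x⟩
      have h3 := Submodule.add_mem_sup h1 h2
      rwa [add_sub_cancel] at h3
  · -- inf = ⊥
    rw [eq_bot_iff]
    intro x hx
    obtain ⟨h1, h2⟩ := Submodule.mem_inf.mp hx
    have hc := (Submodule.mem_inf.mp h1).2
    have hz := (Submodule.mem_inf.mp h2).2
    have : x = 0 := by rw [← hQ_of_const x hc, hQ_zero x hz]
    simp [this]
  · -- uniqueness
    intro E' hE'C hE'inv hsup hinf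
    apply le_antisymm
    · intro x hx
      have hQxE : Q x ∈ E' := hQmem E' hE'inv x hx
      have hQ0 : Q x = 0 := by
        have hmem : Q x ∈ (C ⊓ constantOnCycles σ) ⊓ E' :=
          Submodule.mem_inf.mpr
            ⟨Submodule.mem_inf.mpr ⟨hE'C hQxE, hQconst x⟩, hQxE⟩
        rw [hinf] at hmem
        simpa using hmem
      have h4 := hsub x
      rw [hQ0, sub_zero] at h4
      exact Submodule.mem_inf.mpr ⟨hE'C hx, h4⟩
    · intro x hx
      obtain ⟨hxC, hxZ⟩ := Submodule.mem_inf.mp hx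
      have hxC' : x ∈ (C ⊓ constantOnCycles σ) ⊔ E' := by rw [hsup]; exact hxC
      obtain ⟨y, hy, z, hz, hyz⟩ := Submodule.mem_sup.mp hxC'
      have hy2 := Submodule.mem_inf.mp hy
      have hQz0 : Q z = 0 := by
        have hQzE : Q z ∈ E' := hQmem E' hE'inv z hz
        have hmem : Q z ∈ (C ⊓ constantOnCycles σ) ⊓ E' :=
          Submodule.mem_inf.mpr
            ⟨Submodule.mem_inf.mpr ⟨hE'C hQzE, hQconst z⟩, hQzE⟩
        rw [hinf] at hmem
        simpa using hmem
      have hQx0 : Q x = 0 := hQ_zero x hxZ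
      have hQxy : Q x = y := by
        rw [← hyz, hQadd, hQ_of_const y hy2.2, hQz0, add_zero]
      have hy0 : y = 0 := by rw [← hQxy, hQx0]
      rw [← hyz, hy0, zero_add]
      exact hz
end

section
/- Let F be a finite field, p a prime different from char(F), and C = C^⊥ ⊆ F^n a self-dual code (standard bilinear form) invariant under the coordinate permutation σ with cycles (1,…,p),…,((t−1)p+1,…,tp) and fixed points tp+1,…,n (f = n − tp). Let K* = {(c_{tp+1},…,c_n) ∈ F^f : (0,…,0,c_{tp+1},…,c_n) ∈ C} be the code of fixed-point parts of codewords of the fixed code C(σ) vanishing on all cycles. Then dim_F K* ≥ (f − t)/2 and every nonzero word of K* has Hamming weight at least d(C). -/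
open Finset

/-- Self-duality with respect to a bilinear form given as a function. -/
def IsSelfDualWith {F : Type*} [Field F] {n : ℕ}
    (B : (Fin n → F) → (Fin n → F) → F) (C : Submodule F (Fin n → F)) : Prop :=
  ∀ x, x ∈ C ↔ ∀ c ∈ C, B x c = 0

/-- The standard bilinear form `∑ i, x i * y i`. -/
def stdB {F : Type*} [Field F] {n : ℕ} (x y : Fin n → F) : F := ∑ i, x i * y i

/-- The embedding `F^f → F^(pt+f)`, `y ↦ (0,…,0,y)`, putting `y` on the last `f`
coordinates. -/
def embLast {F : Type*} [Field F] (p t f : ℕ) :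
    (Fin f → F) →ₗ[F] (Fin (p * t + f) → F) where
  toFun y i :=
    if h : p * t ≤ (i : ℕ) then y ⟨(i : ℕ) - p * t, by have := i.isLt; omega⟩
    else 0
  map_add' x y := by
    funext i; by_cases h : p * t ≤ (i : ℕ) <;> simp [h]
  map_smul' c x := by
    funext i; by_cases h : p * t ≤ (i : ℕ) <;> simp [h]


open Finset

section AuxDefs

variable (F : Type*) [Field F] (p t f : ℕ)

/-- Lift a vector of cycle-values and fixed-values to `F^(pt+f)`, constant on cycles. -/
def liftMap : (Fin (t + f) → F) →ₗ[F] (Fin (p * t + f) → F) where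
  toFun u i :=
    if h : (i : ℕ) < p * t then
      u ⟨(i : ℕ) / p, by have := Nat.div_lt_of_lt_mul h; omega⟩
    else u ⟨t + ((i : ℕ) - p * t), by have := i.isLt; omega⟩
  map_add' x y := by
    funext i; by_cases h : (i : ℕ) < p * t <;> simp [h]
  map_smul' c x := by
    funext i; by_cases h : (i : ℕ) < p * t <;> simp [h]

/-- Restrict a vector of `F^(pt+f)` to its cycle starts and fixed coordinates. -/
def resMap (hp0 : 0 < p) : (Fin (p * t + f) → F) →ₗ[F] (Fin (t + f) → F) where
  toFun x j :=
    if h : (j : ℕ) < t then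
      x ⟨p * (j : ℕ), by
        have h1 : p * ((j : ℕ) + 1) ≤ p * t := Nat.mul_le_mul_left p h
        have h2 : p * ((j : ℕ) + 1) = p * (j : ℕ) + p := by ring
        omega⟩
    else x ⟨p * t + ((j : ℕ) - t), by have := j.isLt; omega⟩
  map_add' x y := by
    funext j; by_cases h : (j : ℕ) < t <;> simp [h]
  map_smul' c x := by
    funext j; by_cases h : (j : ℕ) < t <;> simp [h]

/-- The standard bilinear form as a bundled bilinear map. -/
def stdBl {n : ℕ} : (Fin n → F) →ₗ[F] (Fin n → F) →ₗ[F] F :=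
  LinearMap.mk₂ F (fun x y => ∑ i, x i * y i)
    (fun m₁ m₂ n => by simp [add_mul, Finset.sum_add_distrib])
    (fun c m n => by simp [Finset.mul_sum, mul_assoc])
    (fun m n₁ n₂ => by simp [mul_add, Finset.sum_add_distrib])
    (fun c m n => by simp [Finset.mul_sum, mul_left_comm])

variable {F p t f}

lemma liftMap_apply_lt (u : Fin (t + f) → F) (i : Fin (p * t + f)) (h : (i : ℕ) < p * t) :
    liftMap F p t f u i = u ⟨(i : ℕ) / p, by have := Nat.div_lt_of_lt_mul h; omega⟩ :=
  dif_pos h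

lemma liftMap_apply_ge (u : Fin (t + f) → F) (i : Fin (p * t + f)) (h : ¬ (i : ℕ) < p * t) :
    liftMap F p t f u i = u ⟨t + ((i : ℕ) - p * t), by have := i.isLt; omega⟩ :=
  dif_neg h

lemma resMap_apply_lt (hp0 : 0 < p) (x : Fin (p * t + f) → F) (j : Fin (t + f))
    (h : (j : ℕ) < t) :
    resMap F p t f hp0 x j = x ⟨p * (j : ℕ), by
      have h1 : p * ((j : ℕ) + 1) ≤ p * t := Nat.mul_le_mul_left p h
      have h2 : p * ((j : ℕ) + 1) = p * (j : ℕ) + p := by ring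
      omega⟩ :=
  dif_pos h

lemma resMap_apply_ge (hp0 : 0 < p) (x : Fin (p * t + f) → F) (j : Fin (t + f))
    (h : ¬ (j : ℕ) < t) :
    resMap F p t f hp0 x j = x ⟨p * t + ((j : ℕ) - t), by have := j.isLt; omega⟩ :=
  dif_neg h

lemma embLast_apply_ge (y : Fin f → F) (i : Fin (p * t + f)) (h : p * t ≤ (i : ℕ)) :
    embLast p t f y i = y ⟨(i : ℕ) - p * t, by have := i.isLt; omega⟩ :=
  dif_pos h

lemma embLast_apply_lt (y : Fin f → F) (i : Fin (p * t + f)) (h : ¬ p * t ≤ (i : ℕ)) :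
    embLast p t f y i = 0 :=
  dif_neg h

lemma permLinear_mul {n : ℕ} (e₁ e₂ : Equiv.Perm (Fin n)) (x : Fin n → F) :
    permLinear (e₁ * e₂) x = permLinear e₁ (permLinear e₂ x) := by
  funext i
  show x ((e₁ * e₂)⁻¹ i) = x (e₂⁻¹ (e₁⁻¹ i))
  rw [mul_inv_rev]; rfl

lemma permLinear_one {n : ℕ} (x : Fin n → F) : permLinear (1 : Equiv.Perm (Fin n)) x = x := by
  funext i; show x ((1 : Equiv.Perm (Fin n))⁻¹ i) = x i; simp

/-- For any bilinear form and submodule `W`, `dim V ≤ dim W + dim W^⊥`. -/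
lemma finrank_le_orth {F V : Type*} [Field F] [AddCommGroup V] [Module F V]
    [FiniteDimensional F V] (B : V →ₗ[F] V →ₗ[F] F) (W : Submodule F V) :
    Module.finrank F V ≤
      Module.finrank F W + Module.finrank F (LinearMap.ker (B.compl₂ W.subtype)) := by
  have h1 := LinearMap.finrank_range_add_finrank_ker (B.compl₂ W.subtype)
  have h2 : Module.finrank F (LinearMap.range (B.compl₂ W.subtype)) ≤
      Module.finrank F (↥W →ₗ[F] F) := Submodule.finrank_le _
  have h3 : Module.finrank F (↥W →ₗ[F] F) = Module.finrank F W := Subspace.dual_finrank_eq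
  omega

end AuxDefs
/-- Let `p ≠ char F` be prime and `C = C^⊥ ⊆ F^(pt+f)` a self-dual code invariant
under the coordinate permutation `σ` with cycles `(1,…,p)⋯((t-1)p+1,…,tp)` and
fixed points `tp+1,…,n`.  Let `K* = {y ∈ F^f : (0,…,0,y) ∈ C}` be the code of
fixed-point parts of codewords vanishing on all cycles.  Then
`dim K* ≥ (f-t)/2`, and every nonzero word of `K*` has weight at least `d(C)`
(here `d` is a lower bound for the weights of nonzero codewords of `C`). -/
theorem kernel_code_dim_and_distance
    {F : Type*} [Field F] [Fintype F] [DecidableEq F] {p t f : ℕ}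
    (hp : p.Prime) (hchar : p ≠ ringChar F)
    (σ : Equiv.Perm (Fin (p * t + f)))
    (hσ : ∀ i : Fin (p * t + f), (σ i : ℕ) =
      if (i : ℕ) < p * t then p * ((i : ℕ) / p) + (((i : ℕ) % p + 1) % p)
      else (i : ℕ))
    (C : Submodule F (Fin (p * t + f) → F))
    (hsd : IsSelfDualWith stdB C)
    (hinv : C.map (permLinear σ) = C)
    (d : ℕ) (hd : ∀ c ∈ C, c ≠ 0 → d ≤ hammingNorm c) :
    f - t ≤ 2 * Module.finrank F (C.comap (embLast p t f) : Submodule F (Fin f → F)) ∧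
    ∀ y ∈ C.comap (embLast p t f), y ≠ 0 → d ≤ hammingNorm y := by
  have hp0 : 0 < p := hp.pos
  have hpF : (p : F) ≠ 0 := by
    intro h0
    have hdvd : ringChar F ∣ p := (CharP.cast_eq_zero_iff F (ringChar F) p).mp h0
    rcases hp.eq_one_or_self_of_dvd _ hdvd with h1 | h1
    · exact CharP.char_ne_one F (ringChar F) h1
    · exact hchar h1.symm
  -- powers of σ
  have hσpow : ∀ (k : ℕ) (i : Fin (p * t + f)), ((σ ^ k) i : ℕ) =
      if (i : ℕ) < p * t then p * ((i : ℕ) / p) + (((i : ℕ) % p + k) % p) else (i : ℕ) := by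
    intro k
    induction k with
    | zero =>
      intro i
      by_cases h : (i : ℕ) < p * t
      · simp [h, Nat.mod_mod_of_dvd _ dvd_rfl, Nat.div_add_mod]
      · simp [h]
    | succ k ih =>
      intro i
      have hstep : ((σ ^ (k + 1)) i) = (σ ^ k) (σ i) := by
        rw [pow_succ, Equiv.Perm.mul_apply]
      rw [hstep]
      by_cases h : (i : ℕ) < p * t
      · have hσi := hσ i
        rw [if_pos h] at hσi
        have hq : (i : ℕ) / p < t := Nat.div_lt_of_lt_mul h
        have hr : ((i : ℕ) % p + 1) % p < p := Nat.mod_lt _ hp0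
        have hlt : ((σ i : ℕ)) < p * t := by
          have h1 : p * ((i : ℕ) / p + 1) ≤ p * t := Nat.mul_le_mul_left p hq
          have h2 : p * ((i : ℕ) / p + 1) = p * ((i : ℕ) / p) + p := by ring
          omega
        have hdiv : ((σ i : ℕ)) / p = (i : ℕ) / p := by
          rw [hσi, Nat.mul_add_div hp0, Nat.div_eq_of_lt hr, Nat.add_zero]
        have hmod : ((σ i : ℕ)) % p = ((i : ℕ) % p + 1) % p := by
          rw [hσi, Nat.add_mod, Nat.mul_mod_right, Nat.zero_add,
            Nat.mod_mod_of_dvd _ dvd_rfl, Nat.mod_mod_of_dvd _ dvd_rfl]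
        rw [ih (σ i), if_pos hlt, hdiv, hmod, Nat.mod_add_mod, if_pos h]
        have h3 : (i : ℕ) % p + 1 + k = (i : ℕ) % p + (k + 1) := by omega
        rw [h3]
      · have hfixi : σ i = i := Fin.ext (by rw [hσ i]; simp [h])
        rw [hfixi, ih i, if_neg h, if_neg h]
  have hσp : σ ^ p = 1 := by
    apply Equiv.ext; intro i
    apply Fin.ext
    rw [hσpow p i, Equiv.Perm.one_apply]
    by_cases h : (i : ℕ) < p * t
    · rw [if_pos h, Nat.add_mod_right, Nat.mod_mod_of_dvd _ dvd_rfl, Nat.div_add_mod]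
    · rw [if_neg h]
  -- lifted vectors are σ-fixed
  have hfix : ∀ (w : Fin (t + f) → F) (i : Fin (p * t + f)),
      liftMap F p t f w (σ i) = liftMap F p t f w i := by
    intro w i
    by_cases h : (i : ℕ) < p * t
    · have hσi := hσ i
      rw [if_pos h] at hσi
      have hq : (i : ℕ) / p < t := Nat.div_lt_of_lt_mul h
      have hr : ((i : ℕ) % p + 1) % p < p := Nat.mod_lt _ hp0
      have hlt : ((σ i : ℕ)) < p * t := by
        have h1 : p * ((i : ℕ) / p + 1) ≤ p * t := Nat.mul_le_mul_left p hq
        have h2 : p * ((i : ℕ) / p + 1) = p * ((i : ℕ) / p) + p := by ring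
        omega
      have hdiv : ((σ i : ℕ)) / p = (i : ℕ) / p := by
        rw [hσi, Nat.mul_add_div hp0, Nat.div_eq_of_lt hr, Nat.add_zero]
      rw [liftMap_apply_lt w _ hlt, liftMap_apply_lt w i h]
      exact congrArg w (Fin.ext hdiv)
    · have hfixi : σ i = i := Fin.ext (by rw [hσ i]; simp [h])
      rw [hfixi]
  have hfixpow : ∀ (w : Fin (t + f) → F) (k : ℕ) (i : Fin (p * t + f)),
      liftMap F p t f w ((σ ^ k) i) = liftMap F p t f w i := by
    intro w k
    induction k with
    | zero => intro i; simp
    | succ k ih =>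
      intro i
      rw [pow_succ, Equiv.Perm.mul_apply, ih (σ i), hfix w i]
  have hstd_perm : ∀ (w : Fin (t + f) → F) (k : ℕ) (c : Fin (p * t + f) → F),
      stdB (liftMap F p t f w) (permLinear (σ ^ k) c) = stdB (liftMap F p t f w) c := by
    intro w k c
    show (∑ i, liftMap F p t f w i * (permLinear (σ ^ k) c) i)
        = ∑ i, liftMap F p t f w i * c i
    rw [← Equiv.sum_comp (σ ^ k) (fun i => liftMap F p t f w i * (permLinear (σ ^ k) c) i)]
    refine Finset.sum_congr rfl fun i _ => ?_
    have h2 : (permLinear (σ ^ k) c) ((σ ^ k) i) = c i := by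
      show c ((σ ^ k)⁻¹ ((σ ^ k) i)) = c i
      rw [Equiv.Perm.inv_def, Equiv.symm_apply_apply]
    rw [h2, hfixpow w k i]
  have hmemC : ∀ (k : ℕ) (c : Fin (p * t + f) → F), c ∈ C → permLinear (σ ^ k) c ∈ C := by
    intro k
    induction k with
    | zero => intro c hc; rw [pow_zero, permLinear_one]; exact hc
    | succ k ih =>
      intro c hc
      rw [pow_succ', permLinear_mul]
      rw [← hinv]
      exact Submodule.mem_map_of_mem (ih c hc)
  set Dsub : Submodule F (Fin (t + f) → F) := C.comap (liftMap F p t f) with hDdef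
  set Kst : Submodule F (Fin f → F) := C.comap (embLast p t f) with hKdef
  set Bp : (Fin (t + f) → F) →ₗ[F] (Fin (t + f) → F) →ₗ[F] F :=
    (stdBl F).compl₁₂ (liftMap F p t f) (liftMap F p t f) with hBpdef
  -- the key claim: the orthogonal of Dsub is contained in Dsub
  have hDperp : LinearMap.ker (Bp.compl₂ Dsub.subtype) ≤ Dsub := by
    intro u hu
    have hu' : ∀ v : Dsub, stdB (liftMap F p t f u) (liftMap F p t f (v : Fin (t + f) → F)) = 0 := by
      intro v
      exact DFunLike.congr_fun (LinearMap.mem_ker.mp hu) v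
    show liftMap F p t f u ∈ C
    rw [hsd (liftMap F p t f u)]
    intro c hc
    set Nc : Fin (p * t + f) → F := ∑ k ∈ Finset.range p, permLinear (σ ^ k) c with hNcdef
    have hNC : Nc ∈ C := Submodule.sum_mem _ fun k _ => hmemC k c hc
    have hNfix : ∀ j, Nc (σ j) = Nc j := by
      have heq : permLinear σ Nc = Nc := by
        have h1 : permLinear σ Nc = ∑ k ∈ Finset.range p, permLinear (σ ^ (k + 1)) c := by
          rw [hNcdef, map_sum]
          refine Finset.sum_congr rfl fun k _ => ?_
          rw [pow_succ', permLinear_mul]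
        have h2 : permLinear (σ ^ p) c = permLinear (σ ^ 0) c := by rw [hσp, pow_zero]
        have h3 := Finset.sum_range_succ' (fun k => permLinear (σ ^ k) c) p
        have h4 := Finset.sum_range_succ (fun k => permLinear (σ ^ k) c) p
        rw [h1, hNcdef]
        have h5 : (∑ k ∈ Finset.range p, permLinear (σ ^ (k + 1)) c) + permLinear (σ ^ 0) c
            = (∑ k ∈ Finset.range p, permLinear (σ ^ k) c) + permLinear (σ ^ 0) c := by
          rw [← h3, h4, h2]
        exact add_right_cancel h5
      intro j
      have h5 := congrFun heq (σ j)
      rw [show (permLinear σ Nc) (σ j) = Nc (σ⁻¹ (σ j)) from rfl,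
        Equiv.Perm.inv_def, Equiv.symm_apply_apply] at h5
      exact h5.symm
    have hNfixpow : ∀ (k : ℕ) (j), Nc ((σ ^ k) j) = Nc j := by
      intro k
      induction k with
      | zero => intro j; simp
      | succ k ih => intro j; rw [pow_succ, Equiv.Perm.mul_apply, ih (σ j), hNfix j]
    have hconst : ∀ i j : Fin (p * t + f), (i : ℕ) < p * t → (j : ℕ) = p * ((i : ℕ) / p) →
        Nc i = Nc j := by
      intro i j hi hj
      have hb : (j : ℕ) < p * t := by
        rw [hj]
        calc p * ((i : ℕ) / p) ≤ (i : ℕ) := by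
              rw [mul_comm]; exact Nat.div_mul_le_self _ _
          _ < p * t := hi
      have hkey : (σ ^ ((i : ℕ) % p)) j = i := by
        apply Fin.ext
        rw [hσpow, if_pos hb, hj, Nat.mul_div_cancel_left _ hp0, Nat.mul_mod_right,
          Nat.zero_add, Nat.mod_mod_of_dvd _ dvd_rfl, Nat.div_add_mod]
      rw [← hkey, hNfixpow]
    have hLN : liftMap F p t f (resMap F p t f hp0 Nc) = Nc := by
      funext i
      by_cases hi : (i : ℕ) < p * t
      · have hq : (i : ℕ) / p < t := Nat.div_lt_of_lt_mul hi
        calc liftMap F p t f (resMap F p t f hp0 Nc) i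
            = resMap F p t f hp0 Nc ⟨(i : ℕ) / p, by omega⟩ := liftMap_apply_lt _ _ hi
          _ = Nc ⟨p * ((i : ℕ) / p), by
                have h1 : p * ((i : ℕ) / p) ≤ (i : ℕ) := by
                  rw [mul_comm]; exact Nat.div_mul_le_self _ _
                have := i.isLt; omega⟩ := resMap_apply_lt hp0 Nc _ hq
          _ = Nc i := (hconst i _ hi rfl).symm
      · calc liftMap F p t f (resMap F p t f hp0 Nc) i
            = resMap F p t f hp0 Nc ⟨t + ((i : ℕ) - p * t), by have := i.isLt; omega⟩ :=
              liftMap_apply_ge _ _ hi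
          _ = Nc ⟨p * t + ((t + ((i : ℕ) - p * t)) - t), by have := i.isLt; omega⟩ :=
              resMap_apply_ge hp0 Nc _ (by show ¬ t + ((i : ℕ) - p * t) < t; omega)
          _ = Nc i := congrArg Nc (Fin.ext (by
              show p * t + ((t + ((i : ℕ) - p * t)) - t) = (i : ℕ); omega))
    have hvD : resMap F p t f hp0 Nc ∈ Dsub := by
      show liftMap F p t f (resMap F p t f hp0 Nc) ∈ C
      rw [hLN]; exact hNC
    have h0 : stdB (liftMap F p t f u) Nc = 0 := by
      have h9 := hu' ⟨_, hvD⟩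
      rwa [hLN] at h9
    have hsum : stdB (liftMap F p t f u) Nc = (p : F) * stdB (liftMap F p t f u) c := by
      calc stdB (liftMap F p t f u) Nc
          = ∑ i, ∑ k ∈ Finset.range p, liftMap F p t f u i * (permLinear (σ ^ k) c) i := by
            refine Finset.sum_congr rfl fun i _ => ?_
            rw [hNcdef, Finset.sum_apply, Finset.mul_sum]
        _ = ∑ k ∈ Finset.range p, ∑ i, liftMap F p t f u i * (permLinear (σ ^ k) c) i :=
            Finset.sum_comm
        _ = ∑ k ∈ Finset.range p, stdB (liftMap F p t f u) c := by
            refine Finset.sum_congr rfl fun k _ => ?_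
            exact hstd_perm u k c
        _ = (p : F) * stdB (liftMap F p t f u) c := by
            rw [Finset.sum_const, Finset.card_range, nsmul_eq_mul]
    have h01 : (p : F) * stdB (liftMap F p t f u) c = 0 := by rw [← hsum]; exact h0
    exact (mul_eq_zero.mp h01).resolve_left hpF
  -- dimension count
  have hdim1 : Module.finrank F (Fin (t + f) → F) ≤ Module.finrank F Dsub
      + Module.finrank F (LinearMap.ker (Bp.compl₂ Dsub.subtype)) := finrank_le_orth Bp Dsub
  have hdim2 : Module.finrank F (LinearMap.ker (Bp.compl₂ Dsub.subtype))
      ≤ Module.finrank F Dsub := Submodule.finrank_mono hDperp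
  have hdimV : Module.finrank F (Fin (t + f) → F) = t + f := Module.finrank_fin_fun F
  -- projection to the first t coordinates
  set g : Dsub →ₗ[F] (Fin t → F) :=
    (LinearMap.funLeft F F (Fin.castAdd f)).comp Dsub.subtype with hgdef
  have h5 := LinearMap.finrank_range_add_finrank_ker g
  have h6 : Module.finrank F (LinearMap.range g) ≤ t := by
    have h7 := Submodule.finrank_le (LinearMap.range g)
    rwa [Module.finrank_fin_fun] at h7
  have hker_emb : ∀ x : Dsub, x ∈ LinearMap.ker g →
      embLast p t f (LinearMap.funLeft F F (Fin.natAdd t) (x : Fin (t + f) → F)) ∈ C := by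
    intro x hx
    have hx0 : ∀ j : Fin t, (x : Fin (t + f) → F) (Fin.castAdd f j) = 0 := by
      intro j
      exact congrFun (LinearMap.mem_ker.mp hx) j
    have heq : embLast p t f (LinearMap.funLeft F F (Fin.natAdd t) (x : Fin (t + f) → F))
        = liftMap F p t f (x : Fin (t + f) → F) := by
      funext i
      by_cases hi : (i : ℕ) < p * t
      · rw [embLast_apply_lt _ _ (by omega), liftMap_apply_lt _ _ hi]
        have hq : (i : ℕ) / p < t := Nat.div_lt_of_lt_mul hi
        have h8 := hx0 ⟨(i : ℕ) / p, hq⟩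
        have hcast : (Fin.castAdd f ⟨(i : ℕ) / p, hq⟩ : Fin (t + f))
            = ⟨(i : ℕ) / p, by omega⟩ := Fin.ext rfl
        rw [hcast] at h8
        exact h8.symm
      · rw [embLast_apply_ge _ _ (by omega), liftMap_apply_ge _ _ hi]
        exact congrArg (x : Fin (t + f) → F) (Fin.ext rfl)
    rw [heq]
    exact Submodule.mem_comap.mp x.2
  let φ : LinearMap.ker g →ₗ[F] Kst :=
    LinearMap.codRestrict Kst
      ((LinearMap.funLeft F F (Fin.natAdd t)).comp
        (Dsub.subtype.comp (LinearMap.ker g).subtype))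
      (fun x => Submodule.mem_comap.mpr (hker_emb x.1 x.2))
  have hφinj : Function.Injective φ := by
    intro a b hab
    have h7 : ∀ j : Fin f,
        ((a : Dsub) : Fin (t + f) → F) (Fin.natAdd t j)
          = ((b : Dsub) : Fin (t + f) → F) (Fin.natAdd t j) := by
      intro j
      exact congrFun (congrArg Subtype.val hab) j
    apply Subtype.ext; apply Subtype.ext
    funext j
    by_cases hj : (j : ℕ) < t
    · have hcast : (Fin.castAdd f ⟨(j : ℕ), hj⟩ : Fin (t + f)) = j := Fin.ext rfl
      have ha : ((a : Dsub) : Fin (t + f) → F) j = 0 := by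
        have h8 := congrFun (LinearMap.mem_ker.mp a.2) (⟨(j : ℕ), hj⟩ : Fin t)
        rw [← hcast]
        exact h8
      have hb : ((b : Dsub) : Fin (t + f) → F) j = 0 := by
        have h8 := congrFun (LinearMap.mem_ker.mp b.2) (⟨(j : ℕ), hj⟩ : Fin t)
        rw [← hcast]
        exact h8
      rw [ha, hb]
    · have hnat : Fin.natAdd t ⟨(j : ℕ) - t, by have := j.isLt; omega⟩ = j :=
        Fin.ext (by show t + ((j : ℕ) - t) = (j : ℕ); omega)
      rw [← hnat]
      exact h7 _
  have h7 : Module.finrank F (LinearMap.ker g) ≤ Module.finrank F Kst :=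
    LinearMap.finrank_le_finrank_of_injective hφinj
  constructor
  · omega
  · intro y hy hy0
    have hyC : embLast p t f y ∈ C := Submodule.mem_comap.mp hy
    have hne : embLast p t f y ≠ 0 := by
      intro h0
      apply hy0
      funext j
      have h1 := congrFun h0 (⟨p * t + (j : ℕ), by have := j.isLt; omega⟩ : Fin (p * t + f))
      rw [embLast_apply_ge _ _ (by show p * t ≤ p * t + (j : ℕ); omega)] at h1
      have h2 : y ⟨(p * t + (j : ℕ)) - p * t, by have := j.isLt; omega⟩ = y j :=
        congrArg y (Fin.ext (by show p * t + (j : ℕ) - p * t = (j : ℕ); omega))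
      exact h2.symm.trans h1
    have hnorm : hammingNorm (embLast p t f y) ≤ hammingNorm y := by
      have hsub : (Finset.univ.filter fun i => embLast p t f y i ≠ 0) ⊆
          (Finset.univ.filter fun j => y j ≠ 0).image
            (fun j : Fin f => (⟨p * t + (j : ℕ), by have := j.isLt; omega⟩ : Fin (p * t + f))) := by
        intro i hi
        rw [Finset.mem_filter] at hi
        have hge : p * t ≤ (i : ℕ) := by
          by_contra hlt
          exact hi.2 (embLast_apply_lt y i hlt)
        rw [Finset.mem_image]
        refine ⟨⟨(i : ℕ) - p * t, by have := i.isLt; omega⟩, ?_, ?_⟩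
        · rw [Finset.mem_filter]
          refine ⟨Finset.mem_univ _, ?_⟩
          intro h0
          apply hi.2
          rw [embLast_apply_ge y i hge]
          exact h0
        · apply Fin.ext
          show p * t + ((i : ℕ) - p * t) = (i : ℕ)
          omega
      calc hammingNorm (embLast p t f y)
          ≤ ((Finset.univ.filter fun j => y j ≠ 0).image
              (fun j : Fin f => (⟨p * t + (j : ℕ), by have := j.isLt; omega⟩ : Fin (p * t + f)))).card :=
            Finset.card_le_card hsub
        _ ≤ hammingNorm y := Finset.card_image_le
    exact le_trans (hd _ hyC hne) hnorm
end

section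
/- Let t, f be nonnegative integers and suppose there exists a linear code C ⊆ F_3^{t+f} that equals its orthogonal complement with respect to the nondegenerate symmetric bilinear form b(x,y) = −∑_{i=1}^t x_i y_i + ∑_{j=t+1}^{t+f} x_j y_j. Then t ≡ f (mod 4). -/
open Finset

noncomputable def zeta3 : ℂ := (-1 + Real.sqrt 3 * Complex.I) / 2

lemma zeta3_quad : zeta3 ^ 2 + zeta3 + 1 = 0 := by
  have h3 : ((Real.sqrt 3 : ℝ) : ℂ) ^ 2 = 3 := by
    norm_cast
    exact Real.sq_sqrt (by norm_num)
  unfold zeta3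
  linear_combination (((Real.sqrt 3 : ℝ) : ℂ) ^ 2 / 4) * Complex.I_sq + (-1/4 : ℂ) * h3

lemma zeta3_cube : zeta3 ^ 3 = 1 := by
  linear_combination (zeta3 - 1) * zeta3_quad

lemma zeta3_ne_one : zeta3 ≠ 1 := by
  intro h
  have := zeta3_quad
  rw [h] at this
  norm_num at this

lemma zeta3_sq_ne_one : zeta3 ^ 2 ≠ 1 := by
  intro h
  have hq := zeta3_quad
  rw [h] at hq
  have h2 : zeta3 = -2 := by linear_combination hq
  rw [h2] at h
  norm_num at h

noncomputable def chi3 (a : ZMod 3) : ℂ := zeta3 ^ a.val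

lemma zeta3_pow_mod (m : ℕ) : zeta3 ^ m = zeta3 ^ (m % 3) := by
  conv_lhs => rw [← Nat.div_add_mod m 3]
  rw [pow_add, pow_mul, zeta3_cube, one_pow, one_mul]

lemma chi3_zero : chi3 0 = 1 := by simp [chi3]

lemma chi3_add (a b : ZMod 3) : chi3 (a + b) = chi3 a * chi3 b := by
  unfold chi3
  rw [← pow_add, ZMod.val_add, ← zeta3_pow_mod]

lemma chi3_sum {ι : Type*} (s : Finset ι) (g : ι → ZMod 3) :
    chi3 (∑ i ∈ s, g i) = ∏ i ∈ s, chi3 (g i) := by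
  classical
  induction s using Finset.induction with
  | empty => simp [chi3_zero]
  | insert _ _ hns ih => rw [Finset.sum_insert hns, Finset.prod_insert hns, chi3_add, ih]

lemma chi3_ne_one {a : ZMod 3} (ha : a ≠ 0) : chi3 a ≠ 1 := by
  fin_cases a
  · exact (ha rfl).elim
  · simpa [chi3, ZMod.val] using zeta3_ne_one
  · simpa [chi3, ZMod.val] using zeta3_sq_ne_one

noncomputable def gp : ℂ := ∑ a : ZMod 3, chi3 (a * a)
noncomputable def gm : ℂ := ∑ a : ZMod 3, chi3 (-1 * a * a)

lemma univ_zmod3 : (univ : Finset (ZMod 3)) = {0, 1, 2} := by decide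

lemma chi3_one : chi3 1 = zeta3 := by
  have : (1 : ZMod 3).val = 1 := rfl
  simp [chi3, this]

lemma chi3_two : chi3 2 = zeta3 ^ 2 := by
  have : (2 : ZMod 3).val = 2 := rfl
  simp [chi3, this]

lemma gp_eq : gp = 1 + 2 * zeta3 := by
  rw [gp, univ_zmod3]
  rw [Finset.sum_insert (by decide), Finset.sum_insert (by decide), Finset.sum_singleton]
  have h22 : (2 : ZMod 3) * 2 = 1 := by decide
  rw [mul_zero, one_mul, h22, chi3_zero, chi3_one]
  ring

lemma gm_eq : gm = 1 + 2 * zeta3 ^ 2 := by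
  rw [gm, univ_zmod3]
  rw [Finset.sum_insert (by decide), Finset.sum_insert (by decide), Finset.sum_singleton]
  have h1 : (-1 : ZMod 3) * 1 * 1 = 2 := by decide
  have h2 : (-1 : ZMod 3) * 2 * 2 = 2 := by decide
  have h0 : (-1 : ZMod 3) * 0 * 0 = 0 := by decide
  rw [h0, h1, h2, chi3_zero, chi3_two]
  ring

lemma gm_eq_neg_gp : gm = -gp := by
  rw [gm_eq, gp_eq]
  linear_combination 2 * zeta3_quad

lemma gp_sq : gp ^ 2 = -3 := by
  rw [gp_eq]
  linear_combination 4 * zeta3_quad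

noncomputable section

variable (t f : ℕ)

def epsv (i : Fin (t + f)) : ZMod 3 := if (i : ℕ) < t then (-1 : ZMod 3) else 1

def Bform (x y : Fin (t + f) → ZMod 3) : ZMod 3 :=
  ∑ i : Fin (t + f), epsv t f i * x i * y i

variable {t f}

lemma Bform_addL (x y z : Fin (t + f) → ZMod 3) :
    Bform t f (x + y) z = Bform t f x z + Bform t f y z := by
  unfold Bform
  rw [← Finset.sum_add_distrib]
  exact Finset.sum_congr rfl fun i _ => by simp only [Pi.add_apply]; ring

lemma Bform_addR (x y z : Fin (t + f) → ZMod 3) :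
    Bform t f x (y + z) = Bform t f x y + Bform t f x z := by
  unfold Bform
  rw [← Finset.sum_add_distrib]
  exact Finset.sum_congr rfl fun i _ => by simp only [Pi.add_apply]; ring

lemma Bform_symm (x y : Fin (t + f) → ZMod 3) : Bform t f x y = Bform t f y x :=
  Finset.sum_congr rfl fun i _ => by ring

lemma Bform_expand (x c : Fin (t + f) → ZMod 3) :
    Bform t f (x + c) (x + c) = Bform t f x x + 2 * Bform t f x c + Bform t f c c := by
  rw [Bform_addL, Bform_addR, Bform_addR, Bform_symm c x]
  ring

lemma Bform_zeroR (x : Fin (t + f) → ZMod 3) : Bform t f x 0 = 0 := by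
  unfold Bform
  simp

lemma Bform_single (i : Fin (t + f)) (c : Fin (t + f) → ZMod 3) :
    Bform t f (Pi.single i 1) c = epsv t f i * c i := by
  unfold Bform
  rw [Finset.sum_eq_single i]
  · simp
  · intro j _ hj
    rw [Pi.single_eq_of_ne hj, mul_zero, zero_mul]
  · intro hni
    exact absurd (Finset.mem_univ i) hni

lemma epsv_ne_zero (i : Fin (t + f)) : epsv t f i ≠ 0 := by
  unfold epsv
  by_cases hit : (i : ℕ) < t <;> simp [hit]

end

lemma sum_chi3_translate_eq_zero {G : Type*} [AddCommGroup G] [Fintype G] (L : G → ZMod 3)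
    (hL : ∀ a b, L (a + b) = L a + L b) (g₀ : G) (hg : L g₀ ≠ 0) :
    ∑ g : G, chi3 (L g) = 0 := by
  set T := ∑ g : G, chi3 (L g) with hT
  have key : chi3 (L g₀) * T = T := by
    have h1 : T = ∑ g : G, chi3 (L (g₀ + g)) :=
      (Fintype.sum_equiv (Equiv.addLeft g₀) _ _ (fun g => rfl)).symm
    conv_rhs => rw [h1]
    rw [hT, Finset.mul_sum]
    exact Finset.sum_congr rfl fun g _ => by rw [hL, chi3_add]
  have hne : chi3 (L g₀) ≠ 1 := chi3_ne_one hg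
  have hz : (chi3 (L g₀) - 1) * T = 0 := by rw [sub_mul, key, one_mul, sub_self]
  rcases mul_eq_zero.1 hz with h' | h'
  · exact absurd (by linear_combination h') hne
  · exact h'

set_option maxHeartbeats 1000000 in
/-- If there is a code `C ⊆ F₃^(t+f)` equal to its orthogonal complement with
respect to the bilinear form `b(x,y) = -∑_{i<t} x_i y_i + ∑_{t≤j<t+f} x_j y_j`,
then `t ≡ f (mod 4)`. -/
theorem self_dual_signature_mod_four (t f : ℕ)
    (h : ∃ C : Submodule (ZMod 3) (Fin (t + f) → ZMod 3),
      IsSelfDualWith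
        (fun x y => ∑ i : Fin (t + f),
          (if (i : ℕ) < t then (-1 : ZMod 3) else 1) * x i * y i) C) :
    t ≡ f [MOD 4] := by
  classical
  obtain ⟨C, hC⟩ := h
  have hCB : ∀ x, x ∈ C ↔ ∀ c ∈ C, Bform t f x c = 0 := hC
  have hmem : ∀ x ∈ C, ∀ c ∈ C, Bform t f x c = 0 := fun x hx => (hCB x).1 hx
  have h2ne : (2 : ZMod 3) ≠ 0 := by decide
  set N : ℕ := Fintype.card C with hNdef
  set S : ℂ := ∑ x : Fin (t + f) → ZMod 3, chi3 (Bform t f x x) with hS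
  -- Step A : S = gm ^ t * gp ^ f
  have hA : S = gm ^ t * gp ^ f := by
    have h1 : S = ∏ i : Fin (t + f), ∑ a : ZMod 3, chi3 (epsv t f i * a * a) := by
      rw [Finset.prod_univ_sum, Fintype.piFinset_univ]
      exact Finset.sum_congr rfl fun x _ => chi3_sum _ _
    rw [h1]
    have h2 : ∀ i : Fin (t + f), (∑ a : ZMod 3, chi3 (epsv t f i * a * a))
        = if (i : ℕ) < t then gm else gp := by
      intro i
      unfold epsv
      by_cases hi : (i : ℕ) < t
      · simp only [hi, if_true]
        rfl
      · simp only [hi, if_false]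
        rw [gp]
        exact Finset.sum_congr rfl fun a _ => by rw [one_mul]
    calc ∏ i : Fin (t + f), ∑ a : ZMod 3, chi3 (epsv t f i * a * a)
        = ∏ i : Fin (t + f), (if (i : ℕ) < t then gm else gp) :=
          Finset.prod_congr rfl fun i _ => h2 i
      _ = gm ^ t * gp ^ f := by
          rw [Fin.prod_univ_add (f := fun i : Fin (t + f) => if (i : ℕ) < t then gm else gp)]
          congr 1
          · rw [Finset.prod_congr rfl (fun i (_ : i ∈ Finset.univ) => ?_), Finset.prod_const,
              Finset.card_univ, Fintype.card_fin]
            simp [Fin.coe_castAdd, i.isLt]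
          · rw [Finset.prod_congr rfl (fun i (_ : i ∈ Finset.univ) => ?_), Finset.prod_const,
              Finset.card_univ, Fintype.card_fin]
            have : ¬ ((Fin.natAdd t i : ℕ) < t) := by simp [Fin.coe_natAdd]
            simp [this]
  -- orthogonality sums over C
  have hTC : ∀ x : Fin (t + f) → ZMod 3, x ∈ C →
      (∑ c : C, chi3 (2 * Bform t f x (c : Fin (t + f) → ZMod 3))) = (N : ℂ) := by
    intro x hx
    have hz : ∀ c : C, 2 * Bform t f x (c : Fin (t + f) → ZMod 3) = 0 :=
      fun c => by rw [hmem x hx c c.2, mul_zero]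
    simp [hz, chi3_zero, hNdef]
  have hT0 : ∀ x : Fin (t + f) → ZMod 3, x ∉ C →
      (∑ c : C, chi3 (2 * Bform t f x (c : Fin (t + f) → ZMod 3))) = 0 := by
    intro x hx
    have hex : ¬ ∀ c ∈ C, Bform t f x c = 0 := fun hc => hx ((hCB x).2 hc)
    push_neg at hex
    obtain ⟨c₀, hc₀C, hc₀⟩ := hex
    refine sum_chi3_translate_eq_zero
      (fun c : C => 2 * Bform t f x (c : Fin (t + f) → ZMod 3)) ?_ ⟨c₀, hc₀C⟩ ?_
    · intro a b
      show 2 * Bform t f x ((a + b : C) : Fin (t + f) → ZMod 3)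
        = 2 * Bform t f x (a : Fin (t + f) → ZMod 3)
          + 2 * Bform t f x (b : Fin (t + f) → ZMod 3)
      rw [Submodule.coe_add, Bform_addR]
      ring
    · exact mul_ne_zero h2ne hc₀
  have hCount : ∀ x : Fin (t + f) → ZMod 3,
      chi3 (Bform t f x x) * (∑ c : C, chi3 (2 * Bform t f x (c : Fin (t + f) → ZMod 3)))
        = if x ∈ C then (N : ℂ) else 0 := by
    intro x
    by_cases hx : x ∈ C
    · rw [if_pos hx, hTC x hx, hmem x hx x hx, chi3_zero, one_mul]
    · rw [if_neg hx, hT0 x hx, mul_zero]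
  have hfilter : (Finset.univ.filter (fun x : Fin (t + f) → ZMod 3 => x ∈ C)).card = N := by
    rw [hNdef]
    exact (Fintype.card_subtype (fun x : Fin (t + f) → ZMod 3 => x ∈ C)).symm
  have hsumite : ∑ x : Fin (t + f) → ZMod 3, (if x ∈ C then (N : ℂ) else 0) = (N : ℂ) * N := by
    rw [Finset.sum_ite, Finset.sum_const, Finset.sum_const_zero, add_zero, hfilter,
      nsmul_eq_mul]
  -- Step C : N * S = N * N
  have hNS : (N : ℂ) * S = (N : ℂ) * N := by
    have lhs1 : ∑ c : C, ∑ x : Fin (t + f) → ZMod 3, chi3 (Bform t f (x + c) (x + c))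
        = (N : ℂ) * S := by
      have hin : ∀ c : C, ∑ x : Fin (t + f) → ZMod 3, chi3 (Bform t f (x + c) (x + c)) = S := by
        intro c
        rw [hS]
        exact Fintype.sum_equiv (Equiv.addRight (c : Fin (t + f) → ZMod 3)) _ _ (fun x => rfl)
      rw [Finset.sum_congr rfl fun c _ => hin c, Finset.sum_const, Finset.card_univ,
        nsmul_eq_mul, hNdef]
    have lhs2 : ∑ c : C, ∑ x : Fin (t + f) → ZMod 3, chi3 (Bform t f (x + c) (x + c))
        = (N : ℂ) * N := by
      have hexp : ∀ (c : C) (x : Fin (t + f) → ZMod 3),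
          chi3 (Bform t f (x + c) (x + c))
            = chi3 (Bform t f x x) * chi3 (2 * Bform t f x (c : Fin (t + f) → ZMod 3)) := by
        intro c x
        rw [← chi3_add, Bform_expand, hmem c c.2 c c.2, add_zero]
      calc ∑ c : C, ∑ x : Fin (t + f) → ZMod 3, chi3 (Bform t f (x + c) (x + c))
          = ∑ x : Fin (t + f) → ZMod 3, ∑ c : C,
              chi3 (Bform t f x x) * chi3 (2 * Bform t f x (c : Fin (t + f) → ZMod 3)) := by
            rw [Finset.sum_comm]
            exact Finset.sum_congr rfl fun x _ => Finset.sum_congr rfl fun c _ => hexp c x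
        _ = ∑ x : Fin (t + f) → ZMod 3, (if x ∈ C then (N : ℂ) else 0) := by
            refine Finset.sum_congr rfl fun x _ => ?_
            rw [← Finset.mul_sum, hCount x]
        _ = (N : ℂ) * N := hsumite
    rw [← lhs1, lhs2]
  -- Step D : N * N = 3 ^ (t + f)
  have hD : (N : ℂ) * N = (3 : ℂ) ^ (t + f) := by
    have hswap : ∑ x : Fin (t + f) → ZMod 3, ∑ c : C,
          chi3 (2 * Bform t f x (c : Fin (t + f) → ZMod 3))
        = ∑ c : C, ∑ x : Fin (t + f) → ZMod 3,
          chi3 (2 * Bform t f x (c : Fin (t + f) → ZMod 3)) :=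
      Finset.sum_comm
    have hway1 : ∑ x : Fin (t + f) → ZMod 3, ∑ c : C,
        chi3 (2 * Bform t f x (c : Fin (t + f) → ZMod 3)) = (N : ℂ) * N := by
      rw [← hsumite]
      refine Finset.sum_congr rfl fun x _ => ?_
      by_cases hx : x ∈ C
      · rw [if_pos hx, hTC x hx]
      · rw [if_neg hx, hT0 x hx]
    have hinner : ∀ c : C, ∑ x : Fin (t + f) → ZMod 3,
        chi3 (2 * Bform t f x (c : Fin (t + f) → ZMod 3))
          = if c = 0 then (3 : ℂ) ^ (t + f) else 0 := by
      intro c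
      by_cases hc : c = 0
      · subst hc
        rw [if_pos rfl]
        have hz : ∀ x : Fin (t + f) → ZMod 3,
            2 * Bform t f x ((0 : C) : Fin (t + f) → ZMod 3) = 0 := by
          intro x
          rw [Submodule.coe_zero, Bform_zeroR, mul_zero]
        simp only [hz, chi3_zero, Finset.sum_const, Finset.card_univ, nsmul_eq_mul, mul_one]
        rw [Fintype.card_pi]
        simp [ZMod.card]
      · rw [if_neg hc]
        have hcV : (c : Fin (t + f) → ZMod 3) ≠ 0 := fun h0 => hc (Subtype.ext h0)
        obtain ⟨i, hi⟩ := Function.ne_iff.1 hcV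
        simp only [Pi.zero_apply] at hi
        refine sum_chi3_translate_eq_zero
          (fun x : Fin (t + f) → ZMod 3 => 2 * Bform t f x (c : Fin (t + f) → ZMod 3)) ?_
          (Pi.single i 1) ?_
        · intro a b
          show 2 * Bform t f (a + b) (c : Fin (t + f) → ZMod 3)
            = 2 * Bform t f a (c : Fin (t + f) → ZMod 3)
              + 2 * Bform t f b (c : Fin (t + f) → ZMod 3)
          rw [Bform_addL]
          ring
        · show 2 * Bform t f (Pi.single i 1) (c : Fin (t + f) → ZMod 3) ≠ 0
          rw [Bform_single]
          exact mul_ne_zero h2ne (mul_ne_zero (epsv_ne_zero i) hi)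
    have hway2 : ∑ c : C, ∑ x : Fin (t + f) → ZMod 3,
        chi3 (2 * Bform t f x (c : Fin (t + f) → ZMod 3)) = (3 : ℂ) ^ (t + f) := by
      rw [Finset.sum_congr rfl fun c _ => hinner c]
      rw [Finset.sum_ite_eq' Finset.univ (0 : C) (fun _ => (3 : ℂ) ^ (t + f))]
      simp
    rw [hway1.symm.trans (hswap.trans hway2)]
  -- N ≠ 0
  have hN0 : (N : ℂ) ≠ 0 := by
    have : 0 < N := Fintype.card_pos
    exact_mod_cast Nat.cast_ne_zero.2 this.ne'
  have hSN : S = (N : ℂ) := mul_left_cancel₀ hN0 hNS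
  -- Step E : arithmetic
  have hNsq : (N : ℂ) ^ 2 = (3 : ℂ) ^ (t + f) := by rw [sq, hD]
  have hSsq : (N : ℂ) ^ 2 = (-3 : ℂ) ^ (t + f) := by
    rw [← hSN, hA, mul_pow, ← pow_mul, ← pow_mul, mul_comm t 2, mul_comm f 2, pow_mul, pow_mul,
      gm_eq_neg_gp, neg_sq, gp_sq, ← pow_add]
  have heven : Even (t + f) := by
    rcases Nat.even_or_odd (t + f) with he | ho
    · exact he
    · exfalso
      have h1 : (-3 : ℂ) ^ (t + f) = (3 : ℂ) ^ (t + f) := by rw [← hSsq, hNsq]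
      rw [ho.neg_pow] at h1
      have h3 : ((3 : ℂ) ^ (t + f)) ≠ 0 := pow_ne_zero _ (by norm_num)
      have h4 : (-1 : ℂ) * (3 : ℂ) ^ (t + f) = 1 * (3 : ℂ) ^ (t + f) := by
        rw [neg_one_mul, h1, one_mul]
      have := mul_right_cancel₀ h3 h4
      norm_num at this
  obtain ⟨k, hk⟩ := heven
  -- N = 3 ^ k
  have hNnat : N = 3 ^ k := by
    have hcast : ((N * N : ℕ) : ℂ) = ((3 ^ (t + f) : ℕ) : ℂ) := by
      push_cast
      rw [← sq, hNsq]
    have hnat : N * N = 3 ^ (t + f) := Nat.cast_injective hcast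
    have hsq2 : N ^ 2 = (3 ^ k) ^ 2 := by
      rw [sq, hnat, hk]
      ring
    exact Nat.pow_left_injective (by norm_num) hsq2
  -- (-1)^(t+k) = 1
  have hfinal : (-1 : ℂ) ^ (t + k) = 1 := by
    have hgm : gm ^ t * gp ^ f = ((-1 : ℂ)) ^ t * gp ^ (t + f) := by
      rw [gm_eq_neg_gp, neg_pow, pow_add]
      ring
    have hgp : gp ^ (t + f) = ((-3 : ℂ)) ^ k := by
      rw [hk, ← two_mul, pow_mul, gp_sq]
    have hNk : ((-1 : ℂ)) ^ t * ((-3 : ℂ)) ^ k = (N : ℂ) := by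
      rw [← hgp, ← hgm, ← hA, hSN]
    rw [hNnat] at hNk
    push_cast at hNk
    rw [neg_pow 3 k] at hNk
    have h1 : ((-1 : ℂ)) ^ (t + k) * (3 : ℂ) ^ k = 1 * (3 : ℂ) ^ k := by
      rw [pow_add, one_mul]
      calc ((-1 : ℂ)) ^ t * ((-1 : ℂ)) ^ k * (3 : ℂ) ^ k
          = ((-1 : ℂ)) ^ t * (((-1 : ℂ)) ^ k * (3 : ℂ) ^ k) := by ring
        _ = (3 : ℂ) ^ k := hNk
    exact mul_right_cancel₀ (pow_ne_zero _ (by norm_num)) h1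
  have htk : Even (t + k) := by
    rcases Nat.even_or_odd (t + k) with he | ho
    · exact he
    · exfalso
      rw [ho.neg_one_pow] at hfinal
      norm_num at hfinal
  obtain ⟨j, hj⟩ := htk
  show t % 4 = f % 4
  omega
end

section
/- Let g ∈ F_3[x] be an irreducible factor of degree 5 of x^{11} − 1, and let Z ⊆ F_3^{11} be the cyclic code of length 11 with generator polynomial (x−1)g. Then Z has dimension 5, exactly 132 codewords of Hamming weight 6, exactly 110 codewords of Hamming weight 9, and no other nonzero codewords; i.e., its weight enumerator is x^{11} + 132 x^5 y^6 + 110 x^2 y^9. -/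
open Finset Polynomial

/-- The cyclic code of length `m` over `F₃` with generator polynomial `q`:
the ideal generated by `q` in `F₃[x]/(x^m - 1)`, identified with a subspace of
`F₃^m` via the coefficient basis. -/
def cyclicCode (m : ℕ) (q : Polynomial (ZMod 3)) :
    Submodule (ZMod 3) (Fin m → ZMod 3) :=
  Submodule.span (ZMod 3)
    {v : Fin m → ZMod 3 | ∃ r : Polynomial (ZMod 3),
      ∀ i : Fin m, v i = ((q * r) %ₘ (X ^ m - 1)).coeff i}

/- ### Auxiliary definitions -/

noncomputable def gg1 : Polynomial (ZMod 3) := X^5 + X^4 + 2*X^3 + X^2 + 2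
noncomputable def gg2 : Polynomial (ZMod 3) := X^5 + 2*X^3 + X^2 + 2*X + 2

lemma p3 : (3 : Polynomial (ZMod 3)) = 0 := by
  rw [← map_ofNat (C : ZMod 3 →+* Polynomial (ZMod 3)) 3,
    show (OfNat.ofNat 3 : ZMod 3) = 0 from rfl, map_zero]
lemma p4 : (4 : Polynomial (ZMod 3)) = 1 := by
  rw [← map_ofNat (C : ZMod 3 →+* Polynomial (ZMod 3)) 4,
    show (OfNat.ofNat 4 : ZMod 3) = 1 from rfl, map_one]
lemma p6 : (6 : Polynomial (ZMod 3)) = 0 := by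
  rw [← map_ofNat (C : ZMod 3 →+* Polynomial (ZMod 3)) 6,
    show (OfNat.ofNat 6 : ZMod 3) = 0 from rfl, map_zero]

lemma fact1 : (X - 1) * gg1 * gg2 = (X^11 - 1 : Polynomial (ZMod 3)) := by
  unfold gg1 gg2; ring_nf; rw [p3, p4, p6]; ring

lemma gg1_deg : gg1.natDegree = 5 := by unfold gg1; compute_degree!
lemma gg2_deg : gg2.natDegree = 5 := by unfold gg2; compute_degree!
lemma gg1_degree : gg1.degree = 5 := by unfold gg1; compute_degree!
lemma gg2_degree : gg2.degree = 5 := by unfold gg2; compute_degree!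
lemma gg1_monic : gg1.Monic := by
  have h : gg1 = X^5 + (X^4 + 2*X^3 + X^2 + 2) := by unfold gg1; ring
  rw [h]
  apply Polynomial.monic_X_pow_add
  refine lt_of_le_of_lt ?_ (by norm_num : ((4:ℕ):WithBot ℕ) < 5)
  compute_degree
  all_goals norm_num
lemma gg2_monic : gg2.Monic := by
  have h : gg2 = X^5 + (2*X^3 + X^2 + 2*X + 2) := by unfold gg2; ring
  rw [h]
  apply Polynomial.monic_X_pow_add
  refine lt_of_le_of_lt ?_ (by norm_num : ((4:ℕ):WithBot ℕ) < 5)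
  compute_degree
  all_goals norm_num

noncomputable def qOf (c : Fin 7 → ZMod 3) : Polynomial (ZMod 3) :=
  ∑ i : Fin 7, C (c i) * X ^ (i : ℕ)

lemma coeff_qOf (c : Fin 7 → ZMod 3) (n : ℕ) :
    (qOf c).coeff n = if h : n < 7 then c ⟨n, h⟩ else 0 := by
  unfold qOf
  rw [finset_sum_coeff]
  simp only [coeff_C_mul, coeff_X_pow, mul_ite, mul_one, mul_zero]
  by_cases h : n < 7
  · rw [dif_pos h]
    have h2 : ∀ i : Fin 7, (n = (i : ℕ)) ↔ ((⟨n, h⟩ : Fin 7) = i) := by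
      intro i; simp [Fin.ext_iff]
    simp only [h2]
    simp [Finset.sum_ite_eq]
  · rw [dif_neg h]
    apply Finset.sum_eq_zero
    intro i _
    rw [if_neg]
    have := i.isLt
    omega

def qc1 : Fin 7 → ZMod 3 := ![1,2,2,2,1,0,1]
def qc2 : Fin 7 → ZMod 3 := ![1,0,1,2,2,2,1]

lemma q1_eq : (X - 1) * gg1 = qOf qc1 := by
  unfold gg1 qOf qc1
  rw [Fin.sum_univ_seven]
  norm_num [show ((1:Fin 7):ℕ) = 1 from rfl, show ((2:Fin 7):ℕ) = 2 from rfl,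
    show ((3:Fin 7):ℕ) = 3 from rfl, show ((4:Fin 7):ℕ) = 4 from rfl,
    show ((5:Fin 7):ℕ) = 5 from rfl, show ((6:Fin 7):ℕ) = 6 from rfl,
    show (![1,2,2,2,1,0,1] : Fin 7 → ZMod 3) 2 = 2 from rfl,
    show (![1,2,2,2,1,0,1] : Fin 7 → ZMod 3) 3 = 2 from rfl,
    show (![1,2,2,2,1,0,1] : Fin 7 → ZMod 3) 4 = 1 from rfl,
    show (![1,2,2,2,1,0,1] : Fin 7 → ZMod 3) 5 = 0 from rfl,
    show (![1,2,2,2,1,0,1] : Fin 7 → ZMod 3) 6 = 1 from rfl,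
    map_ofNat (C : ZMod 3 →+* Polynomial (ZMod 3))]
  linear_combination (-1 - X^2 - X^3 : Polynomial (ZMod 3)) * p3

lemma q2_eq : (X - 1) * gg2 = qOf qc2 := by
  unfold gg2 qOf qc2
  rw [Fin.sum_univ_seven]
  norm_num [show ((1:Fin 7):ℕ) = 1 from rfl, show ((2:Fin 7):ℕ) = 2 from rfl,
    show ((3:Fin 7):ℕ) = 3 from rfl, show ((4:Fin 7):ℕ) = 4 from rfl,
    show ((5:Fin 7):ℕ) = 5 from rfl, show ((6:Fin 7):ℕ) = 6 from rfl,
    show (![1,0,1,2,2,2,1] : Fin 7 → ZMod 3) 2 = 1 from rfl,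
    show (![1,0,1,2,2,2,1] : Fin 7 → ZMod 3) 3 = 2 from rfl,
    show (![1,0,1,2,2,2,1] : Fin 7 → ZMod 3) 4 = 2 from rfl,
    show (![1,0,1,2,2,2,1] : Fin 7 → ZMod 3) 5 = 2 from rfl,
    show (![1,0,1,2,2,2,1] : Fin 7 → ZMod 3) 6 = 1 from rfl,
    map_ofNat (C : ZMod 3 →+* Polynomial (ZMod 3))]
  linear_combination (-1 - X^3 - X^5 : Polynomial (ZMod 3)) * p3

def W1 : Fin 5 → Fin 11 → ZMod 3 :=
  ![![1,2,2,2,1,0,1,0,0,0,0],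
    ![0,1,2,2,2,1,0,1,0,0,0],
    ![0,0,1,2,2,2,1,0,1,0,0],
    ![0,0,0,1,2,2,2,1,0,1,0],
    ![0,0,0,0,1,2,2,2,1,0,1]]
def W2 : Fin 5 → Fin 11 → ZMod 3 :=
  ![![1,0,1,2,2,2,1,0,0,0,0],
    ![0,1,0,1,2,2,2,1,0,0,0],
    ![0,0,1,0,1,2,2,2,1,0,0],
    ![0,0,0,1,0,1,2,2,2,1,0],
    ![0,0,0,0,1,0,1,2,2,2,1]]

lemma hW1 : ∀ (i : Fin 5) (j : Fin 11), (qOf qc1 * X ^ (i:ℕ)).coeff (j:ℕ) = W1 i j := by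
  intro i j
  rw [Polynomial.coeff_mul_X_pow']
  fin_cases i <;> fin_cases j <;> simp [coeff_qOf, qc1, W1] <;> rfl

lemma hW2 : ∀ (i : Fin 5) (j : Fin 11), (qOf qc2 * X ^ (i:ℕ)).coeff (j:ℕ) = W2 i j := by
  intro i j
  rw [Polynomial.coeff_mul_X_pow']
  fin_cases i <;> fin_cases j <;> simp [coeff_qOf, qc2, W2] <;> rfl

def Gf (W : Fin 5 → Fin 11 → ZMod 3) (a : Fin 5 → ZMod 3) : Fin 11 → ZMod 3 :=
  fun j => ∑ i, a i * W i j

def Glin (W : Fin 5 → Fin 11 → ZMod 3) : (Fin 5 → ZMod 3) →ₗ[ZMod 3] (Fin 11 → ZMod 3) where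
  toFun := Gf W
  map_add' a b := by funext j; simp [Gf, add_mul, Finset.sum_add_distrib]
  map_smul' c a := by funext j; simp [Gf, Finset.mul_sum, mul_assoc]

lemma key (q : Polynomial (ZMod 3)) (W : Fin 5 → Fin 11 → ZMod 3)
    (hW : ∀ (i : Fin 5) (j : Fin 11), (q * X ^ (i:ℕ)).coeff (j:ℕ) = W i j)
    (p : Polynomial (ZMod 3)) (hp : p.natDegree < 5) (j : Fin 11) :
    (q * p).coeff (j:ℕ) = ∑ i : Fin 5, p.coeff (i:ℕ) * W i j := by
  have hrw : q * p = ∑ i ∈ Finset.range 5, C (p.coeff i) * (q * X ^ i) := by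
    conv_lhs => rw [p.as_sum_range' 5 hp]
    rw [Finset.mul_sum]
    refine Finset.sum_congr rfl fun i _ => ?_
    rw [← C_mul_X_pow_eq_monomial]; ring
  rw [hrw, finset_sum_coeff]
  refine ((Fin.sum_univ_eq_sum_range
    (fun i => (C (p.coeff i) * (q * X ^ i)).coeff (j:ℕ)) 5).symm).trans ?_
  refine Finset.sum_congr rfl fun i _ => ?_
  rw [coeff_C_mul, hW i j]

lemma monicM : (X ^ 11 - 1 : Polynomial (ZMod 3)).Monic := by
  have h : (X ^ 11 - 1 : Polynomial (ZMod 3)) = X ^ 11 - C 1 := by rw [map_one]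
  rw [h]; exact monic_X_pow_sub_C 1 (by norm_num)

lemma degM : (X ^ 11 - 1 : Polynomial (ZMod 3)).degree = 11 := by
  compute_degree!

lemma deg_lt (q p : Polynomial (ZMod 3)) (hq : q.degree ≤ 6) (hp : p.degree < 5) :
    (q * p).degree < (X ^ 11 - 1 : Polynomial (ZMod 3)).degree := by
  rw [degM]
  refine lt_of_le_of_lt (degree_mul_le q p) ?_
  have h4 : p.degree ≤ 4 := Order.le_of_lt_succ hp
  calc q.degree + p.degree ≤ 6 + 4 := add_le_add hq h4
    _ < 11 := by norm_num

lemma master (q : Polynomial (ZMod 3)) (W : Fin 5 → Fin 11 → ZMod 3)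
    (h : Polynomial (ZMod 3)) (hmon : h.Monic) (hdeg : h.degree = 5)
    (hqh : q * h = X ^ 11 - 1) (hqdeg : q.degree ≤ 6)
    (hW : ∀ (i : Fin 5) (j : Fin 11), (q * X ^ (i:ℕ)).coeff (j:ℕ) = W i j) :
    cyclicCode 11 q = LinearMap.range (Glin W) := by
  unfold cyclicCode
  rw [show {v : Fin 11 → ZMod 3 | ∃ r : Polynomial (ZMod 3),
      ∀ i : Fin 11, v i = ((q * r) %ₘ (X ^ 11 - 1)).coeff i}
      = ↑(LinearMap.range (Glin W)) from ?_, Submodule.span_eq]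
  ext v
  simp only [Set.mem_setOf_eq, SetLike.mem_coe, LinearMap.mem_range]
  constructor
  · rintro ⟨r, hr⟩
    set p := r %ₘ h with hpdef
    have hplt : p.degree < 5 := hdeg ▸ degree_modByMonic_lt r hmon
    have hpnd : p.natDegree < 5 := by
      rcases eq_or_ne p 0 with h0 | h0
      · rw [h0]; simp
      · exact (natDegree_lt_iff_degree_lt h0).mpr (by exact_mod_cast hplt)
    have h1 : (q * r) %ₘ (X ^ 11 - 1) = q * p := by
      have e1 : q * r = q * p + (X ^ 11 - 1) * (r /ₘ h) := by
        conv_lhs => rw [← modByMonic_add_div r h]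
        rw [← hqh]; ring
      rw [e1, add_modByMonic]
      rw [(modByMonic_eq_self_iff monicM).mpr (deg_lt q p hqdeg hplt)]
      rw [(modByMonic_eq_zero_iff_dvd monicM).mpr ⟨r /ₘ h, rfl⟩, add_zero]
    refine ⟨fun i => p.coeff (i:ℕ), ?_⟩
    funext j
    show Gf W (fun i => p.coeff (i:ℕ)) j = v j
    rw [hr j, h1, key q W hW p hpnd j]
    unfold Gf
    rfl
  · rintro ⟨a, rfl⟩
    set r : Polynomial (ZMod 3) := ∑ i : Fin 5, C (a i) * X ^ (i:ℕ) with hrdef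
    have hrdeg : r.degree < 5 := by
      refine lt_of_le_of_lt (degree_sum_le _ _) ?_
      rw [Finset.sup_lt_iff (by exact_mod_cast WithBot.bot_lt_coe 5)]
      intro i _
      refine lt_of_le_of_lt (degree_C_mul_X_pow_le _ _) ?_
      exact_mod_cast Nat.cast_lt.mpr i.isLt
    have hrnd : r.natDegree < 5 := by
      rcases eq_or_ne r 0 with h0 | h0
      · rw [h0]; simp
      · exact (natDegree_lt_iff_degree_lt h0).mpr (by exact_mod_cast hrdeg)
    have hc : ∀ i : Fin 5, r.coeff (i:ℕ) = a i := by
      intro i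
      rw [hrdef, finset_sum_coeff]
      simp only [coeff_C_mul, coeff_X_pow, mul_ite, mul_one, mul_zero]
      have h2 : ∀ k : Fin 5, ((i:ℕ) = (k:ℕ)) ↔ (i = k) := fun k => Fin.val_eq_val i k
      simp only [h2]
      simp
    refine ⟨r, fun j => ?_⟩
    rw [(modByMonic_eq_self_iff monicM).mpr (deg_lt q r hqdeg hrdeg), key q W hW r hrnd j]
    show Gf W a j = _
    unfold Gf
    refine Finset.sum_congr rfl fun i _ => by rw [hc i]

lemma code_unit (m : ℕ) (q : Polynomial (ZMod 3)) (c : ZMod 3) (hc : c ≠ 0) :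
    cyclicCode m (q * C c) = cyclicCode m q := by
  unfold cyclicCode
  congr 1
  ext v
  simp only [Set.mem_setOf_eq]
  constructor
  · rintro ⟨r, hr⟩
    exact ⟨C c * r, fun i => by rw [hr i]; ring_nf⟩
  · rintro ⟨r, hr⟩
    refine ⟨C c⁻¹ * r, fun i => ?_⟩
    rw [hr i]
    congr 2
    rw [show q * C c * (C c⁻¹ * r) = q * (C c * C c⁻¹) * r by ring, ← map_mul,
      mul_inv_cancel₀ hc, map_one, mul_one]

lemma g_cases (g : Polynomial (ZMod 3)) (hgirr : Irreducible g) (hgdeg : g.natDegree = 5)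
    (hgdvd : g ∣ (X ^ 11 - 1 : Polynomial (ZMod 3))) :
    (∃ c : ZMod 3, c ≠ 0 ∧ gg1 = g * C c) ∨ (∃ c : ZMod 3, c ≠ 0 ∧ gg2 = g * C c) := by
  have hprime : Prime g := (UniqueFactorizationMonoid.irreducible_iff_prime).mp hgirr
  have hdvd' : g ∣ (X - 1) * gg1 * gg2 := by rwa [fact1]
  have hg0 : g ≠ 0 := hgirr.ne_zero
  have hfrom : ∀ gk : Polynomial (ZMod 3), gk.Monic → gk.natDegree = 5 → g ∣ gk →
      ∃ c : ZMod 3, c ≠ 0 ∧ gk = g * C c := by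
    intro gk hmon hdeg ⟨t, ht⟩
    have hgk0 : gk ≠ 0 := hmon.ne_zero
    have ht0 : t ≠ 0 := by rintro rfl; simp at ht; exact hgk0 ht
    have hnd : t.natDegree = 0 := by
      have := natDegree_mul hg0 ht0
      rw [← ht, hdeg, hgdeg] at this
      omega
    have htc : t = C (t.coeff 0) := eq_C_of_natDegree_eq_zero hnd
    refine ⟨t.coeff 0, ?_, by rw [ht]; exact congrArg (fun z => g * z) htc⟩
    intro h0
    rw [h0, map_zero] at htc
    exact ht0 htc
  rcases hprime.2.2 _ _ hdvd' with h1 | h2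
  · rcases hprime.2.2 _ _ h1 with hx | hgg1
    · exfalso
      have hne : (X - 1 : Polynomial (ZMod 3)) ≠ 0 := by
        rw [show (X - 1 : Polynomial (ZMod 3)) = X - C 1 by rw [map_one]]
        exact X_sub_C_ne_zero 1
      have hle := natDegree_le_of_dvd hx hne
      rw [hgdeg, show (X - 1 : Polynomial (ZMod 3)) = X - C 1 by rw [map_one],
        natDegree_X_sub_C] at hle
      omega
    · exact Or.inl (hfrom gg1 gg1_monic gg1_deg hgg1)
  · exact Or.inr (hfrom gg2 gg2_monic gg2_deg h2)

lemma count_w (W : Fin 5 → Fin 11 → ZMod 3)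
    (hinj : Function.Injective (Glin W)) (w k : ℕ)
    (hw : Fintype.card {a : Fin 5 → ZMod 3 // hammingNorm (Gf W a) = w} = k) :
    Nat.card {c : LinearMap.range (Glin W) // hammingNorm (c : Fin 11 → ZMod 3) = w} = k := by
  have e : {a : Fin 5 → ZMod 3 // hammingNorm (Gf W a) = w} ≃
      {c : LinearMap.range (Glin W) // hammingNorm (c : Fin 11 → ZMod 3) = w} := by
    refine Equiv.ofBijective
      (fun a => ⟨⟨Gf W a.1, ⟨a.1, rfl⟩⟩, a.2⟩) ⟨?_, ?_⟩
    · intro a b hab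
      apply Subtype.ext
      apply hinj
      exact congrArg (fun c => (c.1 : Fin 11 → ZMod 3)) hab
    · rintro ⟨⟨v, hv⟩, hwv⟩
      obtain ⟨a, ha⟩ := hv
      refine ⟨⟨a, ?_⟩, ?_⟩
      · rw [show Gf W a = v from ha]; exact hwv
      · apply Subtype.ext; apply Subtype.ext; exact ha
  rw [← Nat.card_congr e, Nat.card_eq_fintype_card, hw]

lemma final_of (Z : Submodule (ZMod 3) (Fin 11 → ZMod 3)) (W : Fin 5 → Fin 11 → ZMod 3)
    (hcode : Z = LinearMap.range (Glin W))
    (hker : ∀ a : Fin 5 → ZMod 3, Gf W a = 0 → a = 0)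
    (h6 : Fintype.card {a : Fin 5 → ZMod 3 // hammingNorm (Gf W a) = 6} = 132)
    (h9 : Fintype.card {a : Fin 5 → ZMod 3 // hammingNorm (Gf W a) = 9} = 110)
    (hall : ∀ a : Fin 5 → ZMod 3,
      Gf W a = 0 ∨ hammingNorm (Gf W a) = 6 ∨ hammingNorm (Gf W a) = 9) :
    Module.finrank (ZMod 3) Z = 5 ∧
    Nat.card {c : Z // hammingNorm (c : Fin 11 → ZMod 3) = 6} = 132 ∧
    Nat.card {c : Z // hammingNorm (c : Fin 11 → ZMod 3) = 9} = 110 ∧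
    ∀ c ∈ Z, c ≠ 0 → hammingNorm c = 6 ∨ hammingNorm c = 9 := by
  subst hcode
  have hinj : Function.Injective (Glin W) := by
    intro a b hab
    have h0 : Glin W (a - b) = 0 := by rw [map_sub, hab, sub_self]
    exact sub_eq_zero.mp (hker _ h0)
  refine ⟨?_, count_w W hinj 6 132 h6, count_w W hinj 9 110 h9, ?_⟩
  · rw [LinearMap.finrank_range_of_inj hinj, Module.finrank_pi, Fintype.card_fin]
  · intro c hc hne
    obtain ⟨a, ha⟩ := hc
    rcases hall a with h0 | h
    · exact absurd (ha ▸ h0) hne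
    · rw [← show Gf W a = c from ha]
      exact h

/- ### Decidable computations -/

set_option maxRecDepth 40000 in
lemma ker1 : ∀ a : Fin 5 → ZMod 3, Gf W1 a = 0 → a = 0 := by decide
set_option maxRecDepth 40000 in
lemma ker2 : ∀ a : Fin 5 → ZMod 3, Gf W2 a = 0 → a = 0 := by decide
set_option maxRecDepth 40000 in
lemma cnt16 : Fintype.card {a : Fin 5 → ZMod 3 // hammingNorm (Gf W1 a) = 6} = 132 := by decide
set_option maxRecDepth 40000 in
lemma cnt19 : Fintype.card {a : Fin 5 → ZMod 3 // hammingNorm (Gf W1 a) = 9} = 110 := by decide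
set_option maxRecDepth 40000 in
lemma cnt26 : Fintype.card {a : Fin 5 → ZMod 3 // hammingNorm (Gf W2 a) = 6} = 132 := by decide
set_option maxRecDepth 40000 in
lemma cnt29 : Fintype.card {a : Fin 5 → ZMod 3 // hammingNorm (Gf W2 a) = 9} = 110 := by decide
set_option maxRecDepth 40000 in
lemma all1 : ∀ a : Fin 5 → ZMod 3,
    Gf W1 a = 0 ∨ hammingNorm (Gf W1 a) = 6 ∨ hammingNorm (Gf W1 a) = 9 := by decide
set_option maxRecDepth 40000 in
lemma all2 : ∀ a : Fin 5 → ZMod 3,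
    Gf W2 a = 0 ∨ hammingNorm (Gf W2 a) = 6 ∨ hammingNorm (Gf W2 a) = 9 := by decide

/- ### Degree bounds for the generators -/

lemma q1_deg : ((X - 1) * gg1 : Polynomial (ZMod 3)).degree ≤ 6 := by
  refine le_trans (degree_mul_le _ _) ?_
  rw [gg1_degree, show (X - 1 : Polynomial (ZMod 3)) = X - C 1 by rw [map_one], degree_X_sub_C]
  norm_num

lemma q2_deg : ((X - 1) * gg2 : Polynomial (ZMod 3)).degree ≤ 6 := by
  refine le_trans (degree_mul_le _ _) ?_
  rw [gg2_degree, show (X - 1 : Polynomial (ZMod 3)) = X - C 1 by rw [map_one], degree_X_sub_C]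
  norm_num

lemma code1 : cyclicCode 11 ((X - 1) * gg1) = LinearMap.range (Glin W1) := by
  rw [q1_eq]
  exact master (qOf qc1) W1 gg2 gg2_monic gg2_degree
    (by rw [← q1_eq]; exact fact1) (q1_eq ▸ q1_deg) hW1

lemma code2 : cyclicCode 11 ((X - 1) * gg2) = LinearMap.range (Glin W2) := by
  rw [q2_eq]
  refine master (qOf qc2) W2 gg1 gg1_monic gg1_degree ?_ (q2_eq ▸ q2_deg) hW2
  rw [← q2_eq, ← fact1]; ring

/-- Let `g` be an irreducible degree-5 factor of `x^11 - 1` over `F₃` and let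
`Z ⊆ F₃^11` be the cyclic code with generator polynomial `(x-1)g`.  Then `Z`
has dimension 5, exactly 132 words of weight 6, exactly 110 words of weight 9,
and no other nonzero words: its weight enumerator is
`x^11 + 132 x^5 y^6 + 110 x^2 y^9`. -/
theorem weight_enumerator_cyclic_code_eleven
    (g : Polynomial (ZMod 3)) (hgirr : Irreducible g) (hgdeg : g.natDegree = 5)
    (hgdvd : g ∣ (X ^ 11 - 1 : Polynomial (ZMod 3))) :
    Module.finrank (ZMod 3) (cyclicCode 11 ((X - 1) * g)) = 5 ∧
    Nat.card {c : cyclicCode 11 ((X - 1) * g) //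
      hammingNorm (c : Fin 11 → ZMod 3) = 6} = 132 ∧
    Nat.card {c : cyclicCode 11 ((X - 1) * g) //
      hammingNorm (c : Fin 11 → ZMod 3) = 9} = 110 ∧
    ∀ c ∈ cyclicCode 11 ((X - 1) * g), c ≠ 0 →
      hammingNorm c = 6 ∨ hammingNorm c = 9 := by
  rcases g_cases g hgirr hgdeg hgdvd with ⟨c, hc, hgg⟩ | ⟨c, hc, hgg⟩
  · have hcode : cyclicCode 11 ((X - 1) * g) = LinearMap.range (Glin W1) := by
      rw [← code_unit 11 ((X - 1) * g) c hc, show (X - 1) * g * C c = (X - 1) * gg1 by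
        rw [hgg]; ring]
      exact code1
    exact final_of _ W1 hcode ker1 cnt16 cnt19 all1
  · have hcode : cyclicCode 11 ((X - 1) * g) = LinearMap.range (Glin W2) := by
      rw [← code_unit 11 ((X - 1) * g) c hc, show (X - 1) * g * C c = (X - 1) * gg2 by
        rw [hgg]; ring]
      exact code2
    exact final_of _ W2 hcode ker2 cnt26 cnt29 all2
end
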